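/- arXiv:2211.07154 — 7 statements merged into one kernel-verified Lean document; each statement's English description precedes it below -/
import Mathlib

section
/- Let G be a finite graph, A, B ⊆ V(G), let S be an (A,B)-separator, and let S' be an important (A,B)-separator that dominates S and has minimum size among all important (A,B)-separators that dominate S. Then S' is linked into S ∩ (R_G(A,S') ∪ S'). -/
open SimpleGraph

variable {V ι : Type*}

/-- The torso of `G` on a vertex set `X`: vertices `u ≠ v` of `X` are adjacent iff there is a
`u`–`v` walk in `G` all of whose internal vertices lie outside `X`. -/
def torsoGraph (G : SimpleGraph V) (X : Set V) : SimpleGraph V where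
  Adj u v := u ≠ v ∧ u ∈ X ∧ v ∈ X ∧
    ∃ p : G.Walk u v, ∀ w ∈ p.support, w = u ∨ w = v ∨ w ∉ X
  symm := ⟨by
    rintro u v ⟨hne, hu, hv, p, hp⟩
    refine ⟨hne.symm, hv, hu, p.reverse, ?_⟩
    intro w hw
    rw [SimpleGraph.Walk.support_reverse, List.mem_reverse] at hw
    rcases hp w hw with h | h | h
    · exact Or.inr (Or.inl h)
    · exact Or.inl h
    · exact Or.inr (Or.inr h)⟩
  loopless := ⟨fun _ h => h.1 rfl⟩

/-- `(T, bag)` is a tree decomposition of `G`. -/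
structure IsTreeDecomp (G : SimpleGraph V) (T : SimpleGraph ι) (bag : ι → Set V) : Prop where
  tree : T.IsTree
  mem_bag : ∀ v : V, ∃ t, v ∈ bag t
  edge_bag : ∀ ⦃u v : V⦄, G.Adj u v → ∃ t, u ∈ bag t ∧ v ∈ bag t
  conn : ∀ v : V, (T.induce {t | v ∈ bag t}).Connected

/-- `(X, (T, bag))` is a torso tree decomposition in `G`, i.e. `(T, bag)` is a tree
decomposition of `torsoGraph G X`. -/
structure IsTorsoTreeDecomp (G : SimpleGraph V) (X : Set V)
    (T : SimpleGraph ι) (bag : ι → Set V) : Prop where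
  tree : T.IsTree
  bag_subset : ∀ t, bag t ⊆ X
  mem_bag : ∀ v ∈ X, ∃ t, v ∈ bag t
  edge_bag : ∀ ⦃u v : V⦄, (torsoGraph G X).Adj u v → ∃ t, u ∈ bag t ∧ v ∈ bag t
  conn : ∀ v ∈ X, (T.induce {t | v ∈ bag t}).Connected

/-- `G` has treewidth at most `k`. -/
def HasTreewidthAtMost (G : SimpleGraph V) (k : ℕ) : Prop :=
  ∃ (n : ℕ) (T : SimpleGraph (Fin n)) (bag : Fin n → Set V),
    IsTreeDecomp G T bag ∧ ∀ t, (bag t).ncard ≤ k + 1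

/-- `S` is an `(X, Y)`-separator in `G`: every walk from `X` to `Y` meets `S`. -/
def IsSep (G : SimpleGraph V) (X Y S : Set V) : Prop :=
  ∀ ⦃x y : V⦄, x ∈ X → y ∈ Y → ∀ p : G.Walk x y, ∃ s ∈ S, s ∈ p.support

/-- The maximum number of vertex-disjoint `X`–`Y` paths; by Menger's theorem this equals the
minimum size of an `(X, Y)`-separator, which is how we define it. -/
noncomputable def flowG (G : SimpleGraph V) (X Y : Set V) : ℕ :=
  sInf (Set.ncard '' {S : Set V | IsSep G X Y S})

/-- `X` is linked into `Y`. -/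
def LinkedInto (G : SimpleGraph V) (X Y : Set V) : Prop :=
  flowG G X Y = X.ncard

/-- `X` is strictly linked into `Y`. -/
def StrictlyLinkedInto (G : SimpleGraph V) (X Y : Set V) : Prop :=
  LinkedInto G X Y ∧
    ∀ S : Set V, IsSep G X Y S → S.ncard = X.ncard → S = X ∨ S = Y

/-- `R_G(X, S)`: the set of vertices of `G \ S` reachable from `X \ S`. -/
def reachG (G : SimpleGraph V) (X S : Set V) : Set V :=
  {v | ∃ x ∈ X, x ∉ S ∧ ∃ p : G.Walk x v, ∀ w ∈ p.support, w ∉ S}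

/-- `S` is a minimal `(X, Y)`-separator. -/
def IsMinimalSep (G : SimpleGraph V) (X Y S : Set V) : Prop :=
  IsSep G X Y S ∧ ∀ S' : Set V, S' ⊂ S → ¬ IsSep G X Y S'

/-- `S` is an important `(A, B)`-separator. -/
def IsImportantSep (G : SimpleGraph V) (A B S : Set V) : Prop :=
  IsMinimalSep G A B S ∧
    ¬ ∃ S' : Set V, IsSep G A B S' ∧ S'.ncard ≤ S.ncard ∧ reachG G A S ⊂ reachG G A S'

/-- The important `(A, B)`-separator `S'` dominates the `(A, B)`-separator `S`. -/
def DominatesSep (G : SimpleGraph V) (A B S S' : Set V) : Prop :=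
  IsImportantSep G A B S' ∧ S'.ncard ≤ S.ncard ∧ reachG G A S ⊆ reachG G A S'

/-- `(A, S, B)` is a separation of `G`. -/
structure IsSeparation (G : SimpleGraph V) (A S B : Set V) : Prop where
  disjoint_AS : Disjoint A S
  disjoint_AB : Disjoint A B
  disjoint_SB : Disjoint S B
  union_eq : A ∪ S ∪ B = Set.univ
  no_adj : ∀ ⦃a b : V⦄, a ∈ A → b ∈ B → ¬ G.Adj a b

open Classical in
/-- The flow potential `flp_G(X, Y)`. -/
noncomputable def flpG (G : SimpleGraph V) (X Y : Set V) : ℕ :=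
  if X = Set.univ then X.ncard
  else sInf {n : ℕ | ∃ A S B : Set V, IsSeparation G A S B ∧
    X ⊆ A ∪ S ∧ Y ⊆ B ∪ S ∧ B.Nonempty ∧ S.ncard = n}

/-- The graph consisting of a clique on `S` (and no other edges). -/
def cliqueOn (S : Set V) : SimpleGraph V where
  Adj u v := u ≠ v ∧ u ∈ S ∧ v ∈ S
  symm := ⟨fun _ _ ⟨h, hu, hv⟩ => ⟨h.symm, hv, hu⟩⟩
  loopless := ⟨fun _ h => h.1 rfl⟩

/-- `G ⊗ S`: the graph obtained from `G` by making `S` a clique. -/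
def addCliqueG (G : SimpleGraph V) (S : Set V) : SimpleGraph V := G ⊔ cliqueOn S

/-- `(G, Ws, k)` is an instance of Partitioned Subset Treewidth: `Ws` is a finite nonempty
family of terminal cliques, `k ≥ 1`, each terminal clique being a clique of `G` of size at
most `k + 1`. -/
def IsPSTWInstance (G : SimpleGraph V) (Ws : Set (Set V)) (k : ℕ) : Prop :=
  Ws.Finite ∧ Ws.Nonempty ∧ 1 ≤ k ∧ ∀ W ∈ Ws, G.IsClique W ∧ W.ncard ≤ k + 1

/-- `(X, (T, bag))` is a solution of the instance `(G, Ws, k)`. -/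
def IsSolutionTD (G : SimpleGraph V) (Ws : Set (Set V)) (k : ℕ)
    (X : Set V) (T : SimpleGraph ι) (bag : ι → Set V) : Prop :=
  IsTorsoTreeDecomp G X T bag ∧ ⋃₀ Ws ⊆ X ∧ ∀ t, (bag t).ncard ≤ k + 1

/-- The instance `(G, Ws, k)` is a yes-instance. -/
def IsYesInstance (G : SimpleGraph V) (Ws : Set (Set V)) (k : ℕ) : Prop :=
  ∃ (κ : Type) (T : SimpleGraph κ) (bag : κ → Set V) (X : Set V),
    IsSolutionTD G Ws k X T bag

/-- `W̄_I(W)`: the union of the terminal cliques other than `W`. -/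
def otherUnion (Ws : Set (Set V)) (W : Set V) : Set V := ⋃₀ (Ws \ {W})

/-- `flp_I(W) = flp_G(W, W̄_I(W))`. -/
noncomputable def flpInst (G : SimpleGraph V) (Ws : Set (Set V)) (W : Set V) : ℕ :=
  flpG G W (otherUnion Ws W)

/-- `(A, S, B)` is a safe separation of the instance `(G, Ws, k)`. -/
def IsSafeSeparation (G : SimpleGraph V) (Ws : Set (Set V)) (A S B : Set V) : Prop :=
  IsSeparation G A S B ∧ A.Nonempty ∧ B.Nonempty ∧
    ∃ Wa ∈ Ws, ∃ Wb ∈ Ws,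
      LinkedInto G S ((A ∪ S) ∩ Wa) ∧ LinkedInto G S ((B ∪ S) ∩ Wb)

/-- `Ws ◁ (A, S)`: remove the terminal cliques not meeting `A`, then insert `S` if no superset
of `S` is present. -/
def restrictCliques (Ws : Set (Set V)) (A S : Set V) : Set (Set V) :=
  {W ∈ Ws | (W ∩ A).Nonempty} ∪
    {W | W = S ∧ ¬ ∃ W' ∈ Ws, (W' ∩ A).Nonempty ∧ S ⊆ W'}

/-- `G ◁ (A, S) = G[A ∪ S] ⊗ S`, as a graph on the vertex set `A ∪ S`. -/
def restrictGraph (G : SimpleGraph V) (A S : Set V) : SimpleGraph ↥(A ∪ S) :=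
  addCliqueG (G.induce (A ∪ S)) (Subtype.val ⁻¹' S)

/-- The terminal cliques of `I ◁ (A, S)`, viewed as subsets of the vertex set `A ∪ S`. -/
def restrictSets (Ws : Set (Set V)) (A S : Set V) : Set (Set ↥(A ∪ S)) :=
  (fun W => Subtype.val ⁻¹' W) '' restrictCliques Ws A S

/-- The terminal cliques of `I × (Wi, Wj)`. -/
def mergeCliques (Ws : Set (Set V)) (Wi Wj : Set V) : Set (Set V) :=
  insert (Wi ∪ Wj) (Ws \ {Wi, Wj})

/-- The terminal cliques of `I + (W, ·)`, replacing `W` by `W'`. -/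
def replaceClique (Ws : Set (Set V)) (W W' : Set V) : Set (Set V) :=
  insert W' (Ws \ {W})

/-- The instance `(G, Ws, k)` is maximally merged. -/
def MaximallyMerged (G : SimpleGraph V) (Ws : Set (Set V)) (k : ℕ) : Prop :=
  ∀ Wi ∈ Ws, ∀ Wj ∈ Ws, Wi ≠ Wj → (Wi ∪ Wj).ncard ≤ k + 1 →
    ¬ IsYesInstance (addCliqueG G (Wi ∪ Wj)) (mergeCliques Ws Wi Wj) k

/-- `Wi` is a potential forget-clique of the instance `(G, Ws, k)`. -/
def IsPotentialForgetClique (G : SimpleGraph V) (Ws : Set (Set V)) (k : ℕ)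
    (Wi : Set V) : Prop :=
  ∃ (κ : Type) (T : SimpleGraph κ) (bag : κ → Set V) (X : Set V),
    IsSolutionTD G Ws k X T bag ∧
    ∃ l p : κ, T.Adj l p ∧ (∀ q, T.Adj l q → q = p) ∧
      Wi ⊆ bag l ∧ ∃ w ∈ Wi \ otherUnion Ws Wi, bag p = bag l \ {w}

/-- The disjoint union of two trees together with one extra edge between `a` and `b`. -/
def glueTrees {ι₁ ι₂ : Type*} (T₁ : SimpleGraph ι₁) (T₂ : SimpleGraph ι₂)
    (a : ι₁) (b : ι₂) : SimpleGraph (ι₁ ⊕ ι₂) where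
  Adj x y :=
    (∃ u v, T₁.Adj u v ∧ x = Sum.inl u ∧ y = Sum.inl v) ∨
    (∃ u v, T₂.Adj u v ∧ x = Sum.inr u ∧ y = Sum.inr v) ∨
    (x = Sum.inl a ∧ y = Sum.inr b) ∨
    (x = Sum.inr b ∧ y = Sum.inl a)
  symm := ⟨by
    rintro x y (⟨u, v, h, rfl, rfl⟩ | ⟨u, v, h, rfl, rfl⟩ | ⟨rfl, rfl⟩ | ⟨rfl, rfl⟩)
    · exact Or.inl ⟨v, u, h.symm, rfl, rfl⟩
    · exact Or.inr (Or.inl ⟨v, u, h.symm, rfl, rfl⟩)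
    · exact Or.inr (Or.inr (Or.inr ⟨rfl, rfl⟩))
    · exact Or.inr (Or.inr (Or.inl ⟨rfl, rfl⟩))⟩
  loopless := ⟨by
    rintro x (⟨u, v, h, rfl, he⟩ | ⟨u, v, h, rfl, he⟩ | ⟨rfl, he⟩ | ⟨rfl, he⟩)
    · exact h.ne (Sum.inl.inj he)
    · exact h.ne (Sum.inr.inj he)
    · exact Sum.inl_ne_inr he
    · exact Sum.inr_ne_inl he⟩

/-- The sum of the weights `d` over the set `S`. -/
noncomputable def setSum [Finite V] (d : V → ℕ) (S : Set V) : ℕ :=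
  ∑ v ∈ S.toFinite.toFinset, d v

section AuxLinked

variable {V' : Type} {G : SimpleGraph V'}

lemma aux_reach_not_mem {A S : Set V'} {v : V'} (h : v ∈ reachG G A S) : v ∉ S := by
  obtain ⟨x, _, _, p, hp⟩ := h
  exact hp v p.end_mem_support

lemma aux_mem_reach_self {A S : Set V'} {x : V'} (hx : x ∈ A) (hxS : x ∉ S) :
    x ∈ reachG G A S := by
  refine ⟨x, hx, hxS, Walk.nil, ?_⟩
  intro w hw
  simp only [Walk.support_nil, List.mem_singleton] at hw
  subst hw; exact hxS

lemma aux_reach_mono {A S₁ S₂ : Set V'} (h : S₁ ⊆ S₂) :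
    reachG G A S₂ ⊆ reachG G A S₁ := by
  rintro v ⟨x, hx, hxS, p, hp⟩
  exact ⟨x, hx, fun hc => hxS (h hc), p, fun w hw hc => hp w hw (h hc)⟩

lemma aux_reach_adj {A S : Set V'} {u v : V'} (hu : u ∈ reachG G A S)
    (huv : G.Adj u v) (hv : v ∉ S) : v ∈ reachG G A S := by
  obtain ⟨x, hx, hxS, p, hp⟩ := hu
  refine ⟨x, hx, hxS, p.append (Walk.cons huv Walk.nil), ?_⟩
  intro w hw
  rw [Walk.mem_support_append_iff] at hw
  rcases hw with hw | hw
  · exact hp w hw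
  · simp only [Walk.support_cons, Walk.support_nil, List.mem_cons, List.mem_singleton,
      List.not_mem_nil, or_false] at hw
    rcases hw with rfl | rfl
    · exact hp w p.end_mem_support
    · exact hv

lemma aux_reach_of_walk [DecidableEq V'] {A S : Set V'} {x v : V'} (hx : x ∈ A) (hxS : x ∉ S)
    (p : G.Walk x v) (hp : ∀ w ∈ p.support, w ∉ S) :
    ∀ w ∈ p.support, w ∈ reachG G A S := by
  intro w hw
  exact ⟨x, hx, hxS, p.takeUntil w hw,
    fun u hu => hp u (Walk.support_takeUntil_subset _ _ hu)⟩

lemma aux_exists_first [DecidableEq V'] {P : Set V'} {x y : V'} (p : G.Walk x y)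
    (h : ∃ s ∈ P, s ∈ p.support) :
    ∃ t ∈ P, ∃ q : G.Walk x t, (∀ w ∈ q.support, w ∈ p.support) ∧
      (∀ w ∈ q.support, w = t ∨ w ∉ P) ∧ q.support.count t = 1 := by
  induction p with
  | nil =>
    obtain ⟨s, hsP, hs⟩ := h
    simp only [Walk.support_nil, List.mem_singleton] at hs
    subst hs
    refine ⟨s, hsP, Walk.nil, ?_, ?_, ?_⟩ <;> simp [Walk.support_nil]
  | @cons x u y h' p' ih =>
    by_cases hxP : x ∈ P
    · refine ⟨x, hxP, Walk.nil, ?_, ?_, ?_⟩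
      · intro w hw
        simp only [Walk.support_nil, List.mem_singleton] at hw
        subst hw; exact (Walk.cons h' p').start_mem_support
      · intro w hw
        simp only [Walk.support_nil, List.mem_singleton] at hw
        exact Or.inl hw
      · simp [Walk.support_nil]
    · obtain ⟨s, hsP, hs⟩ := h
      rw [Walk.support_cons, List.mem_cons] at hs
      have hs' : s ∈ p'.support := by
        rcases hs with rfl | hs
        · exact absurd hsP hxP
        · exact hs
      obtain ⟨t, htP, q, hq1, hq2, hq3⟩ := ih ⟨s, hsP, hs'⟩
      refine ⟨t, htP, Walk.cons h' q, ?_, ?_, ?_⟩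
      · intro w hw
        rw [Walk.support_cons, List.mem_cons] at hw ⊢
        rcases hw with rfl | hw
        · exact Or.inl rfl
        · exact Or.inr (hq1 w hw)
      · intro w hw
        rw [Walk.support_cons, List.mem_cons] at hw
        rcases hw with rfl | hw
        · exact Or.inr hxP
        · exact hq2 w hw
      · rw [Walk.support_cons]
        have htx : t ≠ x := fun hc => hxP (hc ▸ htP)
        rw [List.count_cons_of_ne htx.symm]
        exact hq3

lemma aux_exists_between [DecidableEq V'] {x y s t : V'} (p : G.Walk x y)
    (hs : s ∈ p.support) (ht : t ∈ p.support) :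
    ∃ q : G.Walk s t, ∀ w ∈ q.support, w ∈ p.support := by
  by_cases h : t ∈ (p.dropUntil s hs).support
  · exact ⟨(p.dropUntil s hs).takeUntil t h, fun w hw =>
      Walk.support_dropUntil_subset _ _ (Walk.support_takeUntil_subset _ _ hw)⟩
  · have ht' : t ∈ (p.takeUntil s hs).support := by
      have hspec := Walk.take_spec p hs
      rw [← hspec, Walk.mem_support_append_iff] at ht
      rcases ht with ht | ht
      · exact ht
      · exact absurd ht h
    have ht'' : t ∈ (p.takeUntil s hs).reverse.support := by
      rw [Walk.support_reverse, List.mem_reverse]; exact ht'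
    refine ⟨(p.takeUntil s hs).reverse.takeUntil t ht'', fun w hw => ?_⟩
    have h1 := Walk.support_takeUntil_subset _ _ hw
    rw [Walk.support_reverse, List.mem_reverse] at h1
    exact Walk.support_takeUntil_subset _ _ h1

lemma aux_not_mem_takeUntil [DecidableEq V'] {x z m : V'} (q : G.Walk x z)
    (hcount : q.support.count z = 1) (hm : m ∈ q.support) (hne : m ≠ z) :
    z ∉ (q.takeUntil m hm).support := by
  intro hz
  have hsupp : q.support = (q.takeUntil m hm).support ++ (q.dropUntil m hm).support.tail := by
    conv_lhs => rw [← Walk.take_spec q hm]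
    exact Walk.support_append _ _
  have hz2 : z ∈ (q.dropUntil m hm).support.tail := by
    have hzd : z ∈ (q.dropUntil m hm).support := (q.dropUntil m hm).end_mem_support
    rw [Walk.support_eq_cons, List.mem_cons] at hzd
    rcases hzd with h | h
    · exact absurd h.symm hne
    · exact h
  have h1 : 1 ≤ (q.takeUntil m hm).support.count z := List.count_pos_iff.mpr hz
  have h2 : 1 ≤ ((q.dropUntil m hm).support.tail).count z := List.count_pos_iff.mpr hz2
  rw [hsupp, List.count_append] at hcount
  omega

lemma aux_reach_target {A S S' : Set V'} (hdomR : reachG G A S ⊆ reachG G A S') :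
    ∀ {x t : V'} (q : G.Walk x t), x ∈ reachG G A S →
      (∀ w ∈ q.support, w = t ∨ w ∉ S) → t ∈ reachG G A S' ∪ S' := by
  intro x t q
  induction q with
  | nil => exact fun hx _ => Or.inl (hdomR hx)
  | @cons x u t h q ih =>
    intro hx hq
    have hu : u = t ∨ u ∉ S := hq u (by
      rw [Walk.support_cons, List.mem_cons]; exact Or.inr q.start_mem_support)
    by_cases huS : u ∈ S
    · have hut : u = t := hu.resolve_right (fun hc => hc huS)
      subst hut
      by_cases htS' : u ∈ S'
      · exact Or.inr htS'
      · exact Or.inl (aux_reach_adj (hdomR hx) h htS')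
    · refine ih (aux_reach_adj hx h huS) (fun w hw => hq w ?_)
      rw [Walk.support_cons, List.mem_cons]; exact Or.inr hw

lemma aux_exists_minimal [Fintype V'] {X Y Z : Set V'} (h : IsSep G X Y Z) :
    ∃ Z₀ ⊆ Z, IsMinimalSep G X Y Z₀ := by
  obtain ⟨n, hn⟩ : ∃ n, Z.ncard = n := ⟨_, rfl⟩
  induction n using Nat.strong_induction_on generalizing Z with
  | _ n ih =>
    by_cases hm : ∀ W : Set V', W ⊂ Z → ¬ IsSep G X Y W
    · exact ⟨Z, subset_rfl, h, hm⟩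
    · push_neg at hm
      obtain ⟨W, hWZ, hW⟩ := hm
      have hlt : W.ncard < n := hn ▸ Set.ncard_lt_ncard hWZ Z.toFinite
      obtain ⟨Z₀, hZ₀W, hZ₀⟩ := ih _ hlt hW rfl
      exact ⟨Z₀, hZ₀W.trans hWZ.subset, hZ₀⟩

lemma aux_sep_AB [DecidableEq V'] {A B S S' Z : Set V'}
    (hS : IsSep G A B S) (hS' : IsSep G A B S')
    (hdomR : reachG G A S ⊆ reachG G A S')
    (hZ : IsSep G S' (S ∩ (reachG G A S' ∪ S')) Z) :
    IsSep G A B Z := by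
  intro a b ha hb p
  by_contra hno
  push_neg at hno
  obtain ⟨t, htS, q, hq1, hq2, _⟩ := aux_exists_first p (hS ha hb p)
  have htT : t ∈ S ∩ (reachG G A S' ∪ S') := by
    refine ⟨htS, ?_⟩
    by_cases hta : t = a
    · subst hta
      by_cases h' : t ∈ S'
      · exact Or.inr h'
      · exact Or.inl (aux_mem_reach_self ha h')
    · have haS : a ∉ S := by
        rcases hq2 a q.start_mem_support with h | h
        · exact absurd h.symm hta
        · exact h
      exact aux_reach_target hdomR q (aux_mem_reach_self ha haS) hq2
  obtain ⟨s, hsS', hs⟩ := hS' ha hb p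
  obtain ⟨w, hw⟩ := aux_exists_between p hs (hq1 t q.end_mem_support)
  obtain ⟨z, hzZ, hz⟩ := hZ hsS' htT w
  exact hno z hzZ (hw z hz)

lemma aux_sep_diff [DecidableEq V'] {A S S' Z : Set V'}
    (hdomR : reachG G A S ⊆ reachG G A S')
    (hZ : IsSep G S' (S ∩ (reachG G A S' ∪ S')) Z) :
    IsSep G S' (S ∩ (reachG G A S' ∪ S')) (Z \ reachG G A S) := by
  intro s' t hs' ht w
  by_contra hno
  push_neg at hno
  obtain ⟨z₀, hz₀Z, hz₀⟩ := hZ hs' ht w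
  have hz₀RS : z₀ ∈ reachG G A S := by
    by_contra hc
    exact hno z₀ ⟨hz₀Z, hc⟩ hz₀
  obtain ⟨z, hzRS, q, hq1, hq2, hq3⟩ := aux_exists_first (P := reachG G A S) w ⟨z₀, hz₀RS, hz₀⟩
  have hqZ : ∀ v ∈ q.support, v ∈ Z → v = z := by
    intro v hv hvZ
    rcases hq2 v hv with h | h
    · exact h
    · exact absurd (hq1 v hv) (hno v ⟨hvZ, h⟩)
  have hzS : z ∉ S := aux_reach_not_mem hzRS
  obtain ⟨a, haA, haS, r, hr⟩ := hzRS
  have hs'c : s' ∈ (r.append q.reverse).support := by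
    rw [Walk.mem_support_append_iff]
    right
    rw [Walk.support_reverse, List.mem_reverse]
    exact q.start_mem_support
  obtain ⟨m, hmP, qc, hqc1, hqc2, _⟩ :=
    aux_exists_first (P := S ∪ S') (r.append q.reverse) ⟨s', Or.inr hs', hs'c⟩
  by_cases hmS : m ∈ S
  · have hmT : m ∈ S ∩ (reachG G A S' ∪ S') := by
      refine ⟨hmS, aux_reach_target hdomR qc (aux_mem_reach_self haA haS) ?_⟩
      intro v hv
      rcases hqc2 v hv with h | h
      · exact Or.inl h
      · exact Or.inr (fun hvS => h (Or.inl hvS))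
    have hmq : m ∈ q.support := by
      have h1 := hqc1 m qc.end_mem_support
      rw [Walk.mem_support_append_iff] at h1
      rcases h1 with h1 | h1
      · exact absurd hmS (hr m h1)
      · rw [Walk.support_reverse, List.mem_reverse] at h1; exact h1
    have hmz : m ≠ z := fun hc => hzS (hc ▸ hmS)
    have hzq : z ∉ (q.takeUntil m hmq).support := aux_not_mem_takeUntil q hq3 hmq hmz
    obtain ⟨z', hz'Z, hz'⟩ := hZ hs' hmT (q.takeUntil m hmq)
    have hz'z := hqZ z' (Walk.support_takeUntil_subset _ _ hz') hz'Z
    exact hzq (hz'z ▸ hz')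
  · have hmS' : m ∈ S' := hmP.resolve_left hmS
    have hmRS : m ∈ reachG G A S := by
      refine ⟨a, haA, haS, qc, ?_⟩
      intro v hv
      rcases hqc2 v hv with h | h
      · exact fun hvS => hmS (h ▸ hvS)
      · exact fun hvS => h (Or.inl hvS)
    exact aux_reach_not_mem (hdomR hmRS) hmS'

lemma aux_RS_subset [DecidableEq V'] {A S Z : Set V'}
    (hdisj : ∀ v ∈ Z, v ∉ reachG G A S) :
    reachG G A S ⊆ reachG G A Z := by
  rintro v ⟨a, haA, haS, p, hp⟩
  have hall : ∀ w ∈ p.support, w ∈ reachG G A S := aux_reach_of_walk haA haS p hp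
  refine ⟨a, haA, fun hc => hdisj a hc (hall a p.start_mem_support), p, ?_⟩
  intro w hw hwZ
  exact hdisj w hwZ (hall w hw)

end AuxLinked

/-- Let `S` be an `(A, B)`-separator and `S'` a smallest important `(A, B)`-separator
dominating `S`. Then `S'` is linked into `S ∩ (R_G(A, S') ∪ S')`. -/
theorem smallest_dominating_important_separator_linked {V : Type} [Fintype V]
    (G : SimpleGraph V) (A B S S' : Set V)
    (hS : IsSep G A B S)
    (hdom : DominatesSep G A B S S')
    (hmin : ∀ S'' : Set V, DominatesSep G A B S S'' → S'.ncard ≤ S''.ncard) :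
    LinkedInto G S' (S ∩ (reachG G A S' ∪ S')) := by
  classical
  obtain ⟨himpS', hcard, hdomR⟩ := hdom
  have hS'sep : IsSep G A B S' := himpS'.1.1
  set T := S ∩ (reachG G A S' ∪ S') with hT
  unfold LinkedInto
  by_contra hne
  have hS'T : IsSep G S' T S' := fun x y hx _ p => ⟨x, hx, p.start_mem_support⟩
  have hmem : S'.ncard ∈ Set.ncard '' {Z : Set V | IsSep G S' T Z} := ⟨S', hS'T, rfl⟩
  have hflow : flowG G S' T = sInf (Set.ncard '' {Z : Set V | IsSep G S' T Z}) := rfl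
  have hle : flowG G S' T ≤ S'.ncard := by rw [hflow]; exact Nat.sInf_le hmem
  have hlt : flowG G S' T < S'.ncard := lt_of_le_of_ne hle hne
  obtain ⟨Z, hZsep, hZcard⟩ := Nat.sInf_mem (⟨_, hmem⟩ :
    (Set.ncard '' {Z : Set V | IsSep G S' T Z}).Nonempty)
  rw [← hflow] at hZcard
  set RS := reachG G A S with hRS
  set Z' := Z \ RS with hZ'
  have hZ'sepT : IsSep G S' T Z' := aux_sep_diff hdomR hZsep
  have hZ'sepAB : IsSep G A B Z' := aux_sep_AB hS hS'sep hdomR hZ'sepT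
  have hZ'card : Z'.ncard ≤ Z.ncard := Set.ncard_le_ncard Set.diff_subset Z.toFinite
  have hZ'reach : RS ⊆ reachG G A Z' := aux_RS_subset (fun v hv => hv.2)
  set F := {Y : Set V | IsSep G A B Y ∧ Y.ncard ≤ Z'.ncard ∧ RS ⊆ reachG G A Y} with hF
  have hZ'F : Z' ∈ F := ⟨hZ'sepAB, le_rfl, hZ'reach⟩
  set img := (fun Y : Set V => (reachG G A Y).ncard) '' F with himg
  have himgne : img.Nonempty := ⟨_, Z', hZ'F, rfl⟩
  have hbdd : BddAbove img := by
    refine ⟨(Set.univ : Set V).ncard, ?_⟩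
    rintro n ⟨Y, _, rfl⟩
    exact Set.ncard_le_ncard (Set.subset_univ _) Set.finite_univ
  obtain ⟨Ys, hYsF, hYseq⟩ := Nat.sSup_mem himgne hbdd
  obtain ⟨Z₀, hZ₀sub, hZ₀min⟩ := aux_exists_minimal hYsF.1
  have hZ₀F : Z₀ ∈ F := ⟨hZ₀min.1,
    le_trans (Set.ncard_le_ncard hZ₀sub Ys.toFinite) hYsF.2.1,
    hYsF.2.2.trans (aux_reach_mono hZ₀sub)⟩
  have himp : IsImportantSep G A B Z₀ := by
    refine ⟨hZ₀min, ?_⟩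
    rintro ⟨Y₁, hY₁sep, hY₁card, hY₁reach⟩
    have hY₁F : Y₁ ∈ F := ⟨hY₁sep, hY₁card.trans hZ₀F.2.1, hZ₀F.2.2.trans hY₁reach.subset⟩
    have h1 : (reachG G A Y₁).ncard ≤ sSup img := le_csSup hbdd ⟨Y₁, hY₁F, rfl⟩
    have h2 : (reachG G A Ys).ncard ≤ (reachG G A Z₀).ncard :=
      Set.ncard_le_ncard (aux_reach_mono hZ₀sub) (Set.toFinite _)
    have h3 : (reachG G A Z₀).ncard < (reachG G A Y₁).ncard :=
      Set.ncard_lt_ncard hY₁reach (Set.toFinite _)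
    have hYseq' : (reachG G A Ys).ncard = sSup img := hYseq
    omega
  have hcards : Z₀.ncard ≤ Z.ncard := hZ₀F.2.1.trans hZ'card
  have hdomZ₀ : DominatesSep G A B S Z₀ := ⟨himp, by omega, hZ₀F.2.2⟩
  have := hmin Z₀ hdomZ₀
  omega
end

section
/- Let G be a finite graph and A, B ⊆ V(G). If S is a minimal (A,B)-separator and S' is an important (A,B)-separator that dominates S, then S' is an (S,B)-separator. -/
open SimpleGraph

variable {V ι : Type*}

/-- If `S` is a minimal `(A, B)`-separator and `S'` is an important `(A, B)`-separator that
dominates `S`, then `S'` is an `(S, B)`-separator. -/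
theorem dominating_important_separator_separates {V : Type} [Fintype V]
    (G : SimpleGraph V) (A B S S' : Set V)
    (hS : IsMinimalSep G A B S)
    (hdom : DominatesSep G A B S S') :
    IsSep G S B S' := by
  classical
  intro s b hs hb p
  by_contra hcon
  push_neg at hcon
  -- `s ∉ S'`
  have hsS' : s ∉ S' := fun h => hcon s h p.start_mem_support
  -- `S'` is an `(A,B)`-separator
  have hS'sep : IsSep G A B S' := hdom.1.1.1
  -- `S \ {s}` is not an `(A,B)`-separator
  have hns : ¬ IsSep G A B (S \ {s}) := hS.2 _ (Set.sdiff_singleton_ssubset.mpr hs)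
  unfold IsSep at hns
  push_neg at hns
  obtain ⟨a, b', ha, hb', r, hr⟩ := hns
  -- `S` is a separator, so `r` meets `S`, necessarily at `s`
  obtain ⟨t0, ht0S, ht0r⟩ := hS.1 ha hb' r
  have ht0 : t0 = s := by
    by_contra hne
    exact hr t0 ⟨ht0S, hne⟩ ht0r
  subst ht0
  -- the prefix of `r` up to `s`
  set q := r.takeUntil t0 ht0r with hq
  have hqsub : q.support ⊆ r.support := r.support_takeUntil_subset ht0r
  have hqcount : q.support.count t0 = 1 := r.count_support_takeUntil_eq_one ht0r
  -- the walk `q.append p` from `A` to `B` must meet `S'`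
  obtain ⟨t, htS', htW⟩ := hS'sep ha hb (q.append p)
  rw [SimpleGraph.Walk.support_append, List.mem_append] at htW
  rcases htW with htq | htp
  · -- `t` lies on `q`
    have hts : t ≠ t0 := fun h => hsS' (h ▸ htS')
    -- the prefix of `q` up to `t` avoids `s`
    set q2 := q.takeUntil t htq with hq2
    have hsq2 : t0 ∉ q2.support := by
      intro hsq2
      have hspec := q.take_spec htq
      have : q.support.count t0 =
          q2.support.count t0 + (q.dropUntil t htq).support.tail.count t0 := by
        conv_lhs => rw [← hspec]
        rw [SimpleGraph.Walk.support_append, List.count_append]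
      have h1 : 1 ≤ q2.support.count t0 := List.one_le_count_iff.mpr hsq2
      have h2 : 1 ≤ (q.dropUntil t htq).support.tail.count t0 := by
        apply List.one_le_count_iff.mpr
        have hend : t0 ∈ (q.dropUntil t htq).support :=
          SimpleGraph.Walk.end_mem_support _
        rw [SimpleGraph.Walk.support_eq_cons] at hend
        rcases List.mem_cons.mp hend with h | h
        · exact absurd h.symm hts
        · exact h
      omega
    -- every vertex of `q2` avoids `S`
    have hq2S : ∀ w ∈ q2.support, w ∉ S := by
      intro w hw hwS
      have hwq : w ∈ q.support := q.support_takeUntil_subset htq hw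
      have hwne : w ≠ t0 := fun h => hsq2 (h ▸ hw)
      exact hr w ⟨hwS, hwne⟩ (hqsub hwq)
    -- hence `t ∈ reachG G A S`
    have htreach : t ∈ reachG G A S :=
      ⟨a, ha, hq2S a q2.start_mem_support, q2, hq2S⟩
    have htreach' : t ∈ reachG G A S' := hdom.2.2 htreach
    obtain ⟨x, _, _, p', hp'⟩ := htreach'
    exact hp' t p'.end_mem_support htS'
  · -- `t` lies on `p`
    exact hcon t htS' (List.mem_of_mem_tail htp)
end

section
/- Let I = (G, {W_1, …, W_t}, k) be an instance of Partitioned Subset Treewidth and let (A, S, B) be a separation of G with |S| ≤ k+1. If (X_A, (T_A, bag_A)) is a solution of I ◁ (A,S) and (X_B, (T_B, bag_B)) is a solution of I ◁ (B,S), then (X_A ∪ X_B, (T_A, bag_A) ∪_S (T_B, bag_B)) is a solution of I. -/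
open SimpleGraph

variable {V ι : Type*}

/-! ### Auxiliary lemmas for `combine_solutions` -/

section CombineAux

variable {V : Type*}

lemma IsSeparation.symm' {G : SimpleGraph V} {A S B : Set V}
    (h : IsSeparation G A S B) : IsSeparation G B S A where
  disjoint_AS := h.disjoint_SB.symm
  disjoint_AB := h.disjoint_AB.symm
  disjoint_SB := h.disjoint_AS.symm
  union_eq := by rw [← h.union_eq]; ext x; simp [Set.mem_union]; tauto
  no_adj := fun a b ha hb hadj => h.no_adj hb ha hadj.symm

/-- A walk from `A ∪ S` to `B` must meet `S`. -/
lemma sep_walk_cross {G : SimpleGraph V} {A S B : Set V} (hsep : IsSeparation G A S B) :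
    ∀ {x y : V} (p : G.Walk x y), x ∈ A ∪ S → y ∈ B → ∃ s ∈ S, s ∈ p.support := by
  intro x y p
  induction p with
  | nil =>
    intro hx hy
    exfalso
    rcases hx with h | h
    · exact Set.disjoint_left.mp hsep.disjoint_AB h hy
    · exact Set.disjoint_left.mp hsep.disjoint_SB h hy
  | @cons x z y h q ih =>
    intro hx hy
    rcases hx with hxA | hxS
    · have hzB : z ∉ B := fun hz => hsep.no_adj hxA hz h
      have hz : z ∈ A ∪ S ∪ B := hsep.union_eq ▸ Set.mem_univ z
      have hz' : z ∈ A ∪ S := by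
        rcases hz with h' | h'
        · exact h'
        · exact absurd h' hzB
      obtain ⟨s, hsS, hsm⟩ := ih hz' hy
      exact ⟨s, hsS, by simp [hsm]⟩
    · exact ⟨x, hxS, by simp⟩

/-- A walk staying inside `s` induces a walk in the induced subgraph. -/
lemma walk_toInduce {G : SimpleGraph V} {s : Set V} :
    ∀ {u v : V} (p : G.Walk u v), (∀ w ∈ p.support, w ∈ s) → ∀ (hu : u ∈ s) (hv : v ∈ s),
      ∃ q : (G.induce s).Walk ⟨u, hu⟩ ⟨v, hv⟩, ∀ w ∈ q.support, (w : V) ∈ p.support := by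
  intro u v p
  induction p with
  | nil =>
    intro _ hu hv
    exact ⟨SimpleGraph.Walk.nil, by simp⟩
  | @cons u w v h q ih =>
    intro hsupp hu hv
    have hw : w ∈ s := hsupp w (by simp)
    obtain ⟨q', hq'⟩ := ih (fun z hz => hsupp z (by simp [hz])) hw hv
    refine ⟨SimpleGraph.Walk.cons (by simpa using h) q', ?_⟩
    intro z hz
    rw [SimpleGraph.Walk.support_cons, List.mem_cons] at hz
    rcases hz with rfl | hz
    · simp
    · simp [hq' z hz]

lemma restrict_S_subset_cover {Ws : Set (Set V)} {A S : Set V} {XA : Set ↥(A ∪ S)}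
    (h : ⋃₀ restrictSets Ws A S ⊆ XA) : Subtype.val ⁻¹' S ⊆ XA := by
  intro x hx
  apply h
  by_cases hex : ∃ W' ∈ Ws, (W' ∩ A).Nonempty ∧ S ⊆ W'
  · obtain ⟨W', hW', hWA, hSW⟩ := hex
    exact ⟨Subtype.val ⁻¹' W', ⟨W', Or.inl ⟨hW', hWA⟩, rfl⟩, hSW hx⟩
  · exact ⟨Subtype.val ⁻¹' S, ⟨S, Or.inr ⟨rfl, hex⟩, rfl⟩, hx⟩

lemma clique_subset_side {G : SimpleGraph V} {A S B : Set V} (hsep : IsSeparation G A S B)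
    {W : Set V} (hclq : G.IsClique W) (hWA : (W ∩ A).Nonempty) : W ⊆ A ∪ S := by
  intro x hx
  have hxU : x ∈ A ∪ S ∪ B := hsep.union_eq ▸ Set.mem_univ x
  rcases hxU with h | h
  · exact h
  · exfalso
    obtain ⟨a, haW, haA⟩ := hWA
    have hax : a ≠ x := fun he => Set.disjoint_left.mp hsep.disjoint_AB (he ▸ haA) h
    exact hsep.no_adj haA h (hclq haW hx hax)

/-- The key lemma for `edge_bag`: a torso edge whose endpoints both lie on the `A` side
gives a torso edge of the restricted graph. -/
lemma side_bag {G : SimpleGraph V} {A S B : Set V} (hsep : IsSeparation G A S B)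
    {ι : Type*} {T : SimpleGraph ι} {bag : ι → Set ↥(A ∪ S)} {XA : Set ↥(A ∪ S)}
    (htd : IsTorsoTreeDecomp (restrictGraph G A S) XA T bag)
    {X : Set V} (hXAX : Subtype.val '' XA ⊆ X) (hSX : S ⊆ X)
    {u v : ↥(A ∪ S)} (hu : u ∈ XA) (hv : v ∈ XA) (hne : (u : V) ≠ (v : V))
    (p : G.Walk u v) (hp : ∀ w ∈ p.support, w = ↑u ∨ w = ↑v ∨ w ∉ X) :
    ∃ t, u ∈ bag t ∧ v ∈ bag t := by
  classical
  have hne' : u ≠ v := fun h => hne (congrArg Subtype.val h)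
  set q := p.bypass with hqdef
  have hqpath : q.IsPath := p.bypass_isPath
  have hqsub : q.support ⊆ p.support := p.support_bypass_subset
  have hq : ∀ w ∈ q.support, w = ↑u ∨ w = ↑v ∨ w ∉ X := fun w hw => hp w (hqsub hw)
  have hBAS : ∀ z ∈ B, z ∉ A ∪ S := by
    intro z hz hc
    rcases hc with h | h
    · exact Set.disjoint_left.mp hsep.disjoint_AB h hz
    · exact Set.disjoint_left.mp hsep.disjoint_SB h hz
  by_cases hB : ∃ w ∈ q.support, w ∈ B
  · obtain ⟨w, hw, hwB⟩ := hB
    have huAS : (u : V) ∈ A ∪ S := u.2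
    have hvAS : (v : V) ∈ A ∪ S := v.2
    have hwu : w ≠ ↑u := fun h => hBAS w hwB (h ▸ huAS)
    have hwv : w ≠ ↑v := fun h => hBAS w hwB (h ▸ hvAS)
    have hnodup : q.support.Nodup := hqpath.support_nodup
    have hsupp_eq : q.support =
        (q.takeUntil w hw).support ++ (q.dropUntil w hw).support.tail := by
      rw [← SimpleGraph.Walk.support_append, q.take_spec hw]
    have hdisj : List.Disjoint (q.takeUntil w hw).support
        (q.dropUntil w hw).support.tail := by
      have h2 := hnodup
      rw [hsupp_eq] at h2
      exact List.disjoint_of_nodup_append h2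
    have hvd : (v : V) ∈ (q.dropUntil w hw).support := SimpleGraph.Walk.end_mem_support _
    have hvtail : (v : V) ∈ (q.dropUntil w hw).support.tail := by
      rcases List.mem_cons.mp ((q.dropUntil w hw).support_eq_cons ▸ hvd) with h | h
      · exact absurd h.symm hwv
      · exact h
    have hvt : (v : V) ∉ (q.takeUntil w hw).support := fun hc => hdisj hc hvtail
    have hut : (u : V) ∈ (q.takeUntil w hw).support := SimpleGraph.Walk.start_mem_support _
    have hud : (u : V) ∉ (q.dropUntil w hw).support := by
      intro hc
      have htl : (u : V) ∈ (q.dropUntil w hw).support.tail := by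
        rcases List.mem_cons.mp ((q.dropUntil w hw).support_eq_cons ▸ hc) with h | h
        · exact absurd h.symm hwu
        · exact h
      exact hdisj hut htl
    obtain ⟨s1, hs1S, hs1m⟩ := sep_walk_cross hsep (q.takeUntil w hw) huAS hwB
    have huS : (u : V) ∈ S := by
      rcases hq s1 (q.support_takeUntil_subset hw hs1m) with h | h | h
      · exact h ▸ hs1S
      · exact absurd hs1m (h ▸ hvt)
      · exact absurd (hSX hs1S) h
    obtain ⟨s2, hs2S, hs2m'⟩ := sep_walk_cross hsep (q.dropUntil w hw).reverse
      hvAS hwB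
    have hs2m : s2 ∈ (q.dropUntil w hw).support := by
      rwa [SimpleGraph.Walk.support_reverse, List.mem_reverse] at hs2m'
    have hvS : (v : V) ∈ S := by
      rcases hq s2 (q.support_dropUntil_subset hw hs2m) with h | h | h
      · exact absurd hs2m (h ▸ hud)
      · exact h ▸ hs2S
      · exact absurd (hSX hs2S) h
    have hadj : (restrictGraph G A S).Adj u v :=
      (sup_adj _ _ _ _).mpr (Or.inr ⟨hne', huS, hvS⟩)
    refine htd.edge_bag ⟨hne', hu, hv, SimpleGraph.Walk.cons hadj SimpleGraph.Walk.nil, ?_⟩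
    intro z hz
    rw [SimpleGraph.Walk.support_cons, SimpleGraph.Walk.support_nil, List.mem_cons,
      List.mem_singleton] at hz
    rcases hz with rfl | rfl
    · exact Or.inl rfl
    · exact Or.inr (Or.inl rfl)
  · push_neg at hB
    have hqAS : ∀ z ∈ q.support, z ∈ A ∪ S := by
      intro z hz
      have hzU : z ∈ A ∪ S ∪ B := hsep.union_eq ▸ Set.mem_univ z
      rcases hzU with h | h
      · exact h
      · exact absurd h (hB z hz)
    obtain ⟨q', hq'⟩ := walk_toInduce q hqAS u.2 v.2
    have hle : (G.induce (A ∪ S)) ≤ restrictGraph G A S := le_sup_left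
    refine htd.edge_bag ⟨hne', hu, hv, q'.mapLe hle, ?_⟩
    intro z hz
    have hz' : (z : V) ∈ q.support := by
      apply hq'
      simpa [SimpleGraph.Walk.support_map] using hz
    rcases hq _ hz' with h | h | h
    · exact Or.inl (Subtype.coe_injective h)
    · exact Or.inr (Or.inl (Subtype.coe_injective h))
    · exact Or.inr (Or.inr fun hc => h (hXAX ⟨z, hc, rfl⟩))

end CombineAux

section GlueAux

variable {ι₁ ι₂ : Type*} {T₁ : SimpleGraph ι₁} {T₂ : SimpleGraph ι₂} {a0 : ι₁} {b0 : ι₂}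

/-- The left inclusion homomorphism into a glued tree. -/
def glueInl (T₁ : SimpleGraph ι₁) (T₂ : SimpleGraph ι₂) (a0 : ι₁) (b0 : ι₂) :
    T₁ →g glueTrees T₁ T₂ a0 b0 :=
  ⟨Sum.inl, fun h => Or.inl ⟨_, _, h, rfl, rfl⟩⟩

/-- The right inclusion homomorphism into a glued tree. -/
def glueInr (T₁ : SimpleGraph ι₁) (T₂ : SimpleGraph ι₂) (a0 : ι₁) (b0 : ι₂) :
    T₂ →g glueTrees T₁ T₂ a0 b0 :=
  ⟨Sum.inr, fun h => Or.inr (Or.inl ⟨_, _, h, rfl, rfl⟩)⟩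

lemma glue_connected (h₁ : T₁.Connected) (h₂ : T₂.Connected) :
    (glueTrees T₁ T₂ a0 b0).Connected := by
  rw [connected_iff]
  refine ⟨?_, ⟨Sum.inl a0⟩⟩
  have key : ∀ x, (glueTrees T₁ T₂ a0 b0).Reachable x (Sum.inl a0) := by
    intro x
    cases x with
    | inl a => exact (h₁.preconnected a a0).map (glueInl T₁ T₂ a0 b0)
    | inr b =>
      refine ((h₂.preconnected b b0).map (glueInr T₁ T₂ a0 b0)).trans ?_
      exact SimpleGraph.Adj.reachable (Or.inr (Or.inr (Or.inr ⟨rfl, rfl⟩)))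
  intro x y
  exact (key x).trans (key y).symm

lemma glue_no_cross {H : SimpleGraph (ι₁ ⊕ ι₂)} (hH : H ≤ glueTrees T₁ T₂ a0 b0)
    (hcross : ¬ H.Adj (Sum.inl a0) (Sum.inr b0)) :
    ∀ {x y : ι₁ ⊕ ι₂} (_ : H.Walk x y), x.isLeft → y.isLeft := by
  intro x y p
  induction p with
  | nil => exact id
  | @cons x z y h q ih =>
    intro hx
    apply ih
    obtain ⟨a, rfl⟩ := Sum.isLeft_iff.mp hx
    rcases hH h with ⟨p1, q1, _, he1, rfl⟩ | ⟨p1, q1, _, he1, _⟩ | ⟨he1, rfl⟩ | ⟨he1, _⟩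
    · simp
    · simp at he1
    · exact absurd (he1 ▸ h) hcross
    · simp at he1
  
lemma glue_cross_bridge :
    (glueTrees T₁ T₂ a0 b0).IsBridge s(Sum.inl a0, Sum.inr b0) := by
  rw [SimpleGraph.isBridge_iff]
  rintro ⟨p⟩
  have hcross : ¬ ((glueTrees T₁ T₂ a0 b0) \
      SimpleGraph.fromEdgeSet {s(Sum.inl a0, Sum.inr b0)}).Adj (Sum.inl a0) (Sum.inr b0) := by
    rw [sdiff_adj]
    rintro ⟨-, hne⟩
    exact hne ((SimpleGraph.fromEdgeSet_adj _).mpr ⟨rfl, Sum.inl_ne_inr⟩)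
  have := glue_no_cross sdiff_le hcross p rfl
  simp at this

lemma glue_proj_left {u v : ι₁} :
    ∀ {x y : ι₁ ⊕ ι₂}
      (_ : ((glueTrees T₁ T₂ a0 b0) \
        SimpleGraph.fromEdgeSet {s(Sum.inl u, Sum.inl v)}).Walk x y),
      (T₁ \ SimpleGraph.fromEdgeSet {s(u, v)}).Reachable
        (Sum.elim id (fun _ => a0) x) (Sum.elim id (fun _ => a0) y) := by
  intro x y p
  induction p with
  | nil => exact SimpleGraph.Reachable.refl _
  | @cons x z y h q ih =>
    refine SimpleGraph.Reachable.trans ?_ ih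
    rw [sdiff_adj] at h
    obtain ⟨hT, hne⟩ := h
    rcases hT with ⟨p1, q1, hAdj, rfl, rfl⟩ | ⟨p1, q1, _, rfl, rfl⟩ | ⟨rfl, rfl⟩ | ⟨rfl, rfl⟩
    · simp only [Sum.elim_inl, id_eq]
      refine SimpleGraph.Adj.reachable ?_
      rw [sdiff_adj]
      refine ⟨hAdj, ?_⟩
      rw [SimpleGraph.fromEdgeSet_adj]
      rintro ⟨heq, -⟩
      rw [Set.mem_singleton_iff] at heq
      apply hne
      rw [SimpleGraph.fromEdgeSet_adj]
      refine ⟨?_, fun hc => hAdj.ne (Sum.inl_injective hc)⟩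
      rw [Set.mem_singleton_iff, ← Sym2.map_pair_eq Sum.inl, ← Sym2.map_pair_eq Sum.inl, heq]
    · exact SimpleGraph.Reachable.refl _
    · exact SimpleGraph.Reachable.refl _
    · exact SimpleGraph.Reachable.refl _

lemma glue_proj_right {u v : ι₂} :
    ∀ {x y : ι₁ ⊕ ι₂}
      (_ : ((glueTrees T₁ T₂ a0 b0) \
        SimpleGraph.fromEdgeSet {s(Sum.inr u, Sum.inr v)}).Walk x y),
      (T₂ \ SimpleGraph.fromEdgeSet {s(u, v)}).Reachable
        (Sum.elim (fun _ => b0) id x) (Sum.elim (fun _ => b0) id y) := by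
  intro x y p
  induction p with
  | nil => exact SimpleGraph.Reachable.refl _
  | @cons x z y h q ih =>
    refine SimpleGraph.Reachable.trans ?_ ih
    rw [sdiff_adj] at h
    obtain ⟨hT, hne⟩ := h
    rcases hT with ⟨p1, q1, _, rfl, rfl⟩ | ⟨p1, q1, hAdj, rfl, rfl⟩ | ⟨rfl, rfl⟩ | ⟨rfl, rfl⟩
    · exact SimpleGraph.Reachable.refl _
    · simp only [Sum.elim_inr, id_eq]
      refine SimpleGraph.Adj.reachable ?_
      rw [sdiff_adj]
      refine ⟨hAdj, ?_⟩
      rw [SimpleGraph.fromEdgeSet_adj]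
      rintro ⟨heq, -⟩
      rw [Set.mem_singleton_iff] at heq
      apply hne
      rw [SimpleGraph.fromEdgeSet_adj]
      refine ⟨?_, fun hc => hAdj.ne (Sum.inr_injective hc)⟩
      rw [Set.mem_singleton_iff, ← Sym2.map_pair_eq Sum.inr, ← Sym2.map_pair_eq Sum.inr, heq]
    · exact SimpleGraph.Reachable.refl _
    · exact SimpleGraph.Reachable.refl _

lemma glue_isTree (h₁ : T₁.IsTree) (h₂ : T₂.IsTree) :
    (glueTrees T₁ T₂ a0 b0).IsTree := by
  refine ⟨glue_connected h₁.1 h₂.1, ?_⟩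
  rw [SimpleGraph.isAcyclic_iff_forall_adj_isBridge]
  intro x y hadj
  rw [SimpleGraph.isBridge_iff]
  rcases hadj with ⟨u, v, hTA, rfl, rfl⟩ | ⟨u, v, hTB, rfl, rfl⟩ | ⟨rfl, rfl⟩ | ⟨rfl, rfl⟩
  · rintro ⟨p⟩
    have hbr := SimpleGraph.isBridge_iff.mp
      (SimpleGraph.isAcyclic_iff_forall_adj_isBridge.mp h₁.2 hTA)
    exact hbr (glue_proj_left p)
  · rintro ⟨p⟩
    have hbr := SimpleGraph.isBridge_iff.mp
      (SimpleGraph.isAcyclic_iff_forall_adj_isBridge.mp h₂.2 hTB)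
    exact hbr (glue_proj_right p)
  · exact (SimpleGraph.isBridge_iff.mp glue_cross_bridge)
  · rw [Sym2.eq_swap]
    intro hr
    exact (SimpleGraph.isBridge_iff.mp glue_cross_bridge) hr.symm

/-- Left inclusion of induced subgraphs. -/
def glueInduceHomL (s : Set (ι₁ ⊕ ι₂)) :
    T₁.induce (Sum.inl ⁻¹' s) →g (glueTrees T₁ T₂ a0 b0).induce s where
  toFun x := ⟨Sum.inl x.1, x.2⟩
  map_rel' := by
    intro a b h
    exact Or.inl ⟨a.1, b.1, h, rfl, rfl⟩

/-- Right inclusion of induced subgraphs. -/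
def glueInduceHomR (s : Set (ι₁ ⊕ ι₂)) :
    T₂.induce (Sum.inr ⁻¹' s) →g (glueTrees T₁ T₂ a0 b0).induce s where
  toFun x := ⟨Sum.inr x.1, x.2⟩
  map_rel' := by
    intro a b h
    exact Or.inr (Or.inl ⟨a.1, b.1, h, rfl, rfl⟩)

/-- Connectivity of induced subgraphs of glued trees, left-only case. -/
lemma glue_induce_left {s : Set (ι₁ ⊕ ι₂)} (hs : ∀ x ∈ s, ∃ a, x = Sum.inl a)
    (hconn : (T₁.induce (Sum.inl ⁻¹' s)).Connected) :
    ((glueTrees T₁ T₂ a0 b0).induce s).Connected := by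
  refine hconn.map (glueInduceHomL (a0 := a0) (b0 := b0) s) ?_
  rintro ⟨x, hx⟩
  obtain ⟨a, rfl⟩ := hs x hx
  exact ⟨⟨a, hx⟩, rfl⟩

/-- Connectivity of induced subgraphs of glued trees, right-only case. -/
lemma glue_induce_right {s : Set (ι₁ ⊕ ι₂)} (hs : ∀ x ∈ s, ∃ b, x = Sum.inr b)
    (hconn : (T₂.induce (Sum.inr ⁻¹' s)).Connected) :
    ((glueTrees T₁ T₂ a0 b0).induce s).Connected := by
  refine hconn.map (glueInduceHomR (a0 := a0) (b0 := b0) s) ?_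
  rintro ⟨x, hx⟩
  obtain ⟨b, rfl⟩ := hs x hx
  exact ⟨⟨b, hx⟩, rfl⟩

/-- Connectivity of induced subgraphs of glued trees, two-sided case. -/
lemma glue_induce_both {s : Set (ι₁ ⊕ ι₂)} (ha : Sum.inl a0 ∈ s) (hb : Sum.inr b0 ∈ s)
    (hcA : (T₁.induce (Sum.inl ⁻¹' s)).Connected)
    (hcB : (T₂.induce (Sum.inr ⁻¹' s)).Connected) :
    ((glueTrees T₁ T₂ a0 b0).induce s).Connected := by
  rw [connected_iff]
  refine ⟨?_, ⟨⟨Sum.inl a0, ha⟩⟩⟩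
  have key : ∀ x : s, ((glueTrees T₁ T₂ a0 b0).induce s).Reachable x ⟨Sum.inl a0, ha⟩ := by
    rintro ⟨x, hx⟩
    cases x with
    | inl a =>
      exact (hcA.preconnected ⟨a, hx⟩ ⟨a0, ha⟩).map (glueInduceHomL (a0 := a0) (b0 := b0) s)
    | inr b =>
      refine ((hcB.preconnected ⟨b, hx⟩ ⟨b0, hb⟩).map
        (glueInduceHomR (a0 := a0) (b0 := b0) s)).trans ?_
      exact SimpleGraph.Adj.reachable (Or.inr (Or.inr (Or.inr ⟨rfl, rfl⟩)))
  intro x y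
  exact (key x).trans (key y).symm

end GlueAux


/-- Combining solutions of `I ◁ (A, S)` and `I ◁ (B, S)` along `S` gives a solution of `I`:
if `(X_A, (T_A, bag_A))` solves `I ◁ (A, S)` and `(X_B, (T_B, bag_B))` solves `I ◁ (B, S)`,
then gluing the two tree decompositions by an edge between a bag of `T_A` containing `S` and
a bag of `T_B` containing `S` yields the solution `(X_A ∪ X_B, (T_A, bag_A) ∪_S (T_B, bag_B))`
of `I`. -/
theorem combine_solutions {V : Type} [Fintype V]
    (G : SimpleGraph V) (Ws : Set (Set V)) (k : ℕ)
    (hI : IsPSTWInstance G Ws k)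
    (A S B : Set V) (hsep : IsSeparation G A S B) (hScard : S.ncard ≤ k + 1)
    {ιA ιB : Type}
    (TA : SimpleGraph ιA) (bagA : ιA → Set ↥(A ∪ S)) (XA : Set ↥(A ∪ S))
    (TB : SimpleGraph ιB) (bagB : ιB → Set ↥(B ∪ S)) (XB : Set ↥(B ∪ S))
    (hA : IsSolutionTD (restrictGraph G A S) (restrictSets Ws A S) k XA TA bagA)
    (hB : IsSolutionTD (restrictGraph G B S) (restrictSets Ws B S) k XB TB bagB)
    (a0 : ιA) (ha0 : Subtype.val ⁻¹' S ⊆ bagA a0)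
    (b0 : ιB) (hb0 : Subtype.val ⁻¹' S ⊆ bagB b0) :
    IsSolutionTD G Ws k (Subtype.val '' XA ∪ Subtype.val '' XB)
      (glueTrees TA TB a0 b0)
      (Sum.elim (fun t => Subtype.val '' bagA t) (fun t => Subtype.val '' bagB t)) := by
  
  classical
  set X : Set V := Subtype.val '' XA ∪ Subtype.val '' XB with hXdef
  have hXAX : Subtype.val '' XA ⊆ X := Set.subset_union_left
  have hXBX : Subtype.val '' XB ⊆ X := Set.subset_union_right
  have hSXA : Subtype.val ⁻¹' S ⊆ XA := restrict_S_subset_cover hA.2.1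
  have hSXB : Subtype.val ⁻¹' S ⊆ XB := restrict_S_subset_cover hB.2.1
  have hSA : S ⊆ Subtype.val '' XA := fun x hx => ⟨⟨x, Or.inr hx⟩, hSXA hx, rfl⟩
  have hSB : S ⊆ Subtype.val '' XB := fun x hx => ⟨⟨x, Or.inr hx⟩, hSXB hx, rfl⟩
  have hSX : S ⊆ X := fun x hx => hXAX (hSA hx)
  have hABS : ∀ x : V, x ∈ A ∪ S → x ∈ B ∪ S → x ∈ S := by
    intro x h1 h2
    rcases h1 with h1 | h1
    · rcases h2 with h2 | h2
      · exact absurd h2 (Set.disjoint_left.mp hsep.disjoint_AB h1)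
      · exact h2
    · exact h1
  have memA : ∀ (x : ↥(A ∪ S)) (t : ιA),
      (↑x : V) ∈ Subtype.val '' bagA t ↔ x ∈ bagA t := by
    intro x t
    constructor
    · rintro ⟨y, hy, hxy⟩
      exact (Subtype.ext hxy) ▸ hy
    · intro h
      exact ⟨x, h, rfl⟩
  have memB : ∀ (x : ↥(B ∪ S)) (t : ιB),
      (↑x : V) ∈ Subtype.val '' bagB t ↔ x ∈ bagB t := by
    intro x t
    constructor
    · rintro ⟨y, hy, hxy⟩
      exact (Subtype.ext hxy) ▸ hy
    · intro h
      exact ⟨x, h, rfl⟩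
  refine ⟨⟨?_, ?_, ?_, ?_, ?_⟩, ?_, ?_⟩
  · -- tree
    exact glue_isTree hA.1.tree hB.1.tree
  · -- bag_subset
    rintro (t | t)
    · exact (Set.image_mono  (hA.1.bag_subset t)).trans hXAX
    · exact (Set.image_mono  (hB.1.bag_subset t)).trans hXBX
  · -- mem_bag
    rintro v (⟨x, hx, rfl⟩ | ⟨x, hx, rfl⟩)
    · obtain ⟨t, ht⟩ := hA.1.mem_bag x hx
      exact ⟨Sum.inl t, ⟨x, ht, rfl⟩⟩
    · obtain ⟨t, ht⟩ := hB.1.mem_bag x hx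
      exact ⟨Sum.inr t, ⟨x, ht, rfl⟩⟩
  · -- edge_bag
    rintro u v ⟨hne, hu, hv, p, hp⟩
    by_cases hc1 : u ∈ Subtype.val '' XA ∧ v ∈ Subtype.val '' XA
    · obtain ⟨⟨uS, huS, rfl⟩, vS, hvS, hvv⟩ := hc1
      subst hvv
      obtain ⟨t, h1, h2⟩ := side_bag hsep hA.1 hXAX hSX huS hvS hne p hp
      exact ⟨Sum.inl t, ⟨uS, h1, rfl⟩, ⟨vS, h2, rfl⟩⟩
    · by_cases hc2 : u ∈ Subtype.val '' XB ∧ v ∈ Subtype.val '' XB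
      · obtain ⟨⟨uS, huS, rfl⟩, vS, hvS, hvv⟩ := hc2
        subst hvv
        obtain ⟨t, h1, h2⟩ := side_bag hsep.symm' hB.1 hXBX hSX huS hvS hne p hp
        exact ⟨Sum.inr t, ⟨uS, h1, rfl⟩, ⟨vS, h2, rfl⟩⟩
      · exfalso
        rcases hu with huA | huB
        · have hvB : v ∈ Subtype.val '' XB := by
            rcases hv with h | h
            · exact absurd ⟨huA, h⟩ hc1
            · exact h
          have hvA : v ∉ Subtype.val '' XA := fun h => hc1 ⟨huA, h⟩
          have huB : u ∉ Subtype.val '' XB := fun h => hc2 ⟨h, hvB⟩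
          obtain ⟨uS, huXA, rfl⟩ := huA
          have huA' : (↑uS : V) ∈ A := by
            rcases uS.2 with h | h
            · exact h
            · exact absurd (hSB h) huB
          obtain ⟨vS, hvXB, rfl⟩ := hvB
          have hvB' : (↑vS : V) ∈ B := by
            rcases vS.2 with h | h
            · exact h
            · exact absurd (hSA h) hvA
          obtain ⟨s, hsS, hsm⟩ := sep_walk_cross hsep p (Or.inl huA') hvB'
          rcases hp s hsm with h | h | h
          · exact Set.disjoint_left.mp hsep.disjoint_AS huA' (h ▸ hsS)
          · exact Set.disjoint_left.mp hsep.disjoint_SB (h ▸ hsS) hvB'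
          · exact h (hSX hsS)
        · have hvA : v ∈ Subtype.val '' XA := by
            rcases hv with h | h
            · exact h
            · exact absurd ⟨huB, h⟩ hc2
          have hvB : v ∉ Subtype.val '' XB := fun h => hc2 ⟨huB, h⟩
          have huA : u ∉ Subtype.val '' XA := fun h => hc1 ⟨h, hvA⟩
          obtain ⟨uS, huXB, rfl⟩ := huB
          have huB' : (↑uS : V) ∈ B := by
            rcases uS.2 with h | h
            · exact h
            · exact absurd (hSA h) huA
          obtain ⟨vS, hvXA, rfl⟩ := hvA
          have hvA' : (↑vS : V) ∈ A := by
            rcases vS.2 with h | h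
            · exact h
            · exact absurd (hSB h) hvB
          obtain ⟨s, hsS, hsm⟩ := sep_walk_cross hsep.symm' p (Or.inl huB') hvA'
          rcases hp s hsm with h | h | h
          · exact Set.disjoint_left.mp hsep.disjoint_SB (h ▸ hsS) huB'
          · exact Set.disjoint_left.mp hsep.disjoint_AS hvA' (h ▸ hsS)
          · exact h (hSX hsS)
  · -- conn
    rintro v (⟨vA, hvXA, rfl⟩ | ⟨vB, hvXB, rfl⟩)
    · by_cases hvB : (↑vA : V) ∈ Subtype.val '' XB
      · obtain ⟨vB, hvXB, hvv⟩ := hvB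
        have hvS : (↑vA : V) ∈ S := hABS _ vA.2 (hvv ▸ vB.2)
        refine glue_induce_both ?_ ?_ ?_ ?_
        · exact ⟨vA, ha0 hvS, rfl⟩
        · exact ⟨vB, hb0 (show (↑vB : V) ∈ S from hvv ▸ hvS), hvv⟩
        · have hset : Sum.inl ⁻¹' {t | (↑vA : V) ∈
              Sum.elim (fun t => Subtype.val '' bagA t) (fun t => Subtype.val '' bagB t) t}
              = {t | vA ∈ bagA t} := by
            ext t
            exact memA vA t
          rw [hset]
          exact hA.1.conn vA hvXA
        · have hset : Sum.inr ⁻¹' {t | (↑vA : V) ∈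
              Sum.elim (fun t => Subtype.val '' bagA t) (fun t => Subtype.val '' bagB t) t}
              = {t | vB ∈ bagB t} := by
            ext t
            show (↑vA : V) ∈ Subtype.val '' bagB t ↔ _
            rw [← hvv]
            exact memB vB t
          rw [hset]
          exact hB.1.conn vB hvXB
      · refine glue_induce_left ?_ ?_
        · rintro (a | b) hx
          · exact ⟨a, rfl⟩
          · exact absurd (Set.image_mono  (hB.1.bag_subset b) hx) hvB
        · have hset : Sum.inl ⁻¹' {t | (↑vA : V) ∈
              Sum.elim (fun t => Subtype.val '' bagA t) (fun t => Subtype.val '' bagB t) t}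
              = {t | vA ∈ bagA t} := by
            ext t
            exact memA vA t
          rw [hset]
          exact hA.1.conn vA hvXA
    · by_cases hvA : (↑vB : V) ∈ Subtype.val '' XA
      · obtain ⟨vA, hvXA, hvv⟩ := hvA
        have hvS : (↑vB : V) ∈ S := hABS _ (hvv ▸ vA.2) vB.2
        refine glue_induce_both ?_ ?_ ?_ ?_
        · exact ⟨vA, ha0 (show (↑vA : V) ∈ S from hvv ▸ hvS), hvv⟩
        · exact ⟨vB, hb0 hvS, rfl⟩
        · have hset : Sum.inl ⁻¹' {t | (↑vB : V) ∈
              Sum.elim (fun t => Subtype.val '' bagA t) (fun t => Subtype.val '' bagB t) t}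
              = {t | vA ∈ bagA t} := by
            ext t
            show (↑vB : V) ∈ Subtype.val '' bagA t ↔ _
            rw [← hvv]
            exact memA vA t
          rw [hset]
          exact hA.1.conn vA hvXA
        · have hset : Sum.inr ⁻¹' {t | (↑vB : V) ∈
              Sum.elim (fun t => Subtype.val '' bagA t) (fun t => Subtype.val '' bagB t) t}
              = {t | vB ∈ bagB t} := by
            ext t
            exact memB vB t
          rw [hset]
          exact hB.1.conn vB hvXB
      · refine glue_induce_right ?_ ?_
        · rintro (a | b) hx
          · exact absurd (Set.image_mono  (hA.1.bag_subset a) hx) hvA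
          · exact ⟨b, rfl⟩
        · have hset : Sum.inr ⁻¹' {t | (↑vB : V) ∈
              Sum.elim (fun t => Subtype.val '' bagA t) (fun t => Subtype.val '' bagB t) t}
              = {t | vB ∈ bagB t} := by
            ext t
            exact memB vB t
          rw [hset]
          exact hB.1.conn vB hvXB
  · -- coverage
    rintro w ⟨W, hW, hwW⟩
    by_cases hWA : (W ∩ A).Nonempty
    · have hWsub := clique_subset_side hsep (hI.2.2.2 W hW).1 hWA
      exact hXAX ⟨⟨w, hWsub hwW⟩,
        hA.2.1 ⟨Subtype.val ⁻¹' W, ⟨W, Or.inl ⟨hW, hWA⟩, rfl⟩, hwW⟩, rfl⟩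
    · by_cases hWB : (W ∩ B).Nonempty
      · have hWsub := clique_subset_side hsep.symm' (hI.2.2.2 W hW).1 hWB
        exact hXBX ⟨⟨w, hWsub hwW⟩,
          hB.2.1 ⟨Subtype.val ⁻¹' W, ⟨W, Or.inl ⟨hW, hWB⟩, rfl⟩, hwW⟩, rfl⟩
      · have hwS : w ∈ S := by
          have hwU : w ∈ A ∪ S ∪ B := hsep.union_eq ▸ Set.mem_univ w
          rcases hwU with (h | h) | h
          · exact absurd ⟨w, hwW, h⟩ hWA
          · exact h
          · exact absurd ⟨w, hwW, h⟩ hWB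
        exact hSX hwS
  · -- width
    rintro (t | t)
    · show (Subtype.val '' bagA t).ncard ≤ k + 1
      rw [Set.ncard_image_of_injective _ Subtype.coe_injective]
      exact hA.2.2 t
    · show (Subtype.val '' bagB t).ncard ≤ k + 1
      rw [Set.ncard_image_of_injective _ Subtype.coe_injective]
      exact hB.2.2 t
end

section
/- Let I = (G, {W_1, …, W_t}, k) be an instance of Partitioned Subset Treewidth and let (A, S, B) be a separation of G with |S| ≤ k+1. If {W_1, …, W_t} ◁ (A,S) = {W_1, …, W_t}, then flp_{I ◁ (A,S)}(W_i) ≥ flp_I(W_i) for every terminal clique W_i. -/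
open SimpleGraph

variable {V ι : Type*}

private lemma restrictGraph_adj' {V : Type*} (G : SimpleGraph V) (A S : Set V)
    (a b : ↥(A ∪ S)) :
    (restrictGraph G A S).Adj a b ↔ G.Adj a b ∨ (a ≠ b ∧ (a:V) ∈ S ∧ (b:V) ∈ S) :=
  Iff.rfl

/-- If `(A, S, B)` is a separation of `G` with `|S| ≤ k + 1` and the terminal cliques of
`I ◁ (A, S)` coincide with those of `I`, then `flp_{I ◁ (A,S)}(W_i) ≥ flp_I(W_i)` for every
terminal clique `W_i`. -/
theorem restrict_same_cliques_flp {V : Type} [Fintype V]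
    (G : SimpleGraph V) (Ws : Set (Set V)) (k : ℕ)
    (hI : IsPSTWInstance G Ws k)
    (A S B : Set V) (hsep : IsSeparation G A S B) (hScard : S.ncard ≤ k + 1)
    (hsame : restrictCliques Ws A S = Ws) :
    ∀ Wi ∈ Ws,
      flpInst G Ws Wi
        ≤ flpInst (restrictGraph G A S) (restrictSets Ws A S) (Subtype.val ⁻¹' Wi) := by
  intro Wi hWi
  classical
  have hvalinj : Function.Injective (Subtype.val : ↥(A ∪ S) → V) := Subtype.val_injective
  -- every terminal clique is contained in A ∪ S
  have hWsub : ∀ W ∈ Ws, W ⊆ A ∪ S := by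
    intro W hW
    have hW' : W ∈ restrictCliques Ws A S := by rw [hsame]; exact hW
    rcases hW' with ⟨hWmem, a, haW, haA⟩ | ⟨rfl, -⟩
    · intro v hvW
      by_contra hvP
      have hvB : v ∈ B := by
        have hu : v ∈ A ∪ S ∪ B := by rw [hsep.union_eq]; trivial
        rcases hu with h | h
        · exact absurd h hvP
        · exact h
      have hne : a ≠ v := hsep.disjoint_AB.ne_of_mem haA hvB
      exact hsep.no_adj haA hvB ((hI.2.2.2 W hW).1 haW hvW hne)
    · exact Set.subset_union_right
  have hWiP : Wi ⊆ A ∪ S := hWsub Wi hWi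
  have hYP : otherUnion Ws Wi ⊆ A ∪ S := by
    rintro y ⟨W, hWmem, hyW⟩
    exact hWsub W hWmem.1 hyW
  -- lifting membership in the other-union
  have hYlift : ∀ y : ↥(A ∪ S), (y : V) ∈ otherUnion Ws Wi →
      y ∈ otherUnion (restrictSets Ws A S) (Subtype.val ⁻¹' Wi) := by
    rintro y ⟨W, ⟨hWmem, hWne⟩, hyW⟩
    refine ⟨Subtype.val ⁻¹' W, ⟨⟨W, by rw [hsame]; exact hWmem, rfl⟩, ?_⟩, hyW⟩
    intro hcon
    apply hWne
    have hcon' : (Subtype.val ⁻¹' W : Set ↥(A ∪ S)) = Subtype.val ⁻¹' Wi := hcon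
    have e1 : Subtype.val '' (Subtype.val ⁻¹' W : Set ↥(A ∪ S)) = W :=
      Set.image_preimage_eq_of_subset (by rw [Subtype.range_coe]; exact hWsub W hWmem)
    have e2 : Subtype.val '' (Subtype.val ⁻¹' Wi : Set ↥(A ∪ S)) = Wi :=
      Set.image_preimage_eq_of_subset (by rw [Subtype.range_coe]; exact hWiP)
    have hWWi : W = Wi := by rw [← e1, hcon', e2]
    exact hWWi ▸ rfl
  -- transfer of separations
  have htrans : ∀ n : ℕ, (∃ A' S' B' : Set ↥(A ∪ S),
        IsSeparation (restrictGraph G A S) A' S' B' ∧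
        (Subtype.val ⁻¹' Wi : Set ↥(A ∪ S)) ⊆ A' ∪ S' ∧
        otherUnion (restrictSets Ws A S) (Subtype.val ⁻¹' Wi) ⊆ B' ∪ S' ∧
        B'.Nonempty ∧ S'.ncard = n) →
      ∃ A₀ S₀ B₀ : Set V, IsSeparation G A₀ S₀ B₀ ∧
        Wi ⊆ A₀ ∪ S₀ ∧ otherUnion Ws Wi ⊆ B₀ ∪ S₀ ∧ B₀.Nonempty ∧ S₀.ncard = n := by
    rintro n ⟨A', S', B', hsep', hWi', hY', hB', hS'⟩
    have himA : Subtype.val '' A' ⊆ A ∪ S := Subtype.coe_image_subset _ _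
    have himS : Subtype.val '' S' ⊆ A ∪ S := Subtype.coe_image_subset _ _
    have himB : Subtype.val '' B' ⊆ A ∪ S := Subtype.coe_image_subset _ _
    have hdisjBP : Disjoint B (A ∪ S) := by
      rw [Set.disjoint_union_right]
      exact ⟨hsep.disjoint_AB.symm, hsep.disjoint_SB.symm⟩
    have hcard : (Subtype.val '' S').ncard = n := by
      rw [Set.ncard_image_of_injective _ hvalinj]; exact hS'
    have hWi₀ : Wi ⊆ (Subtype.val '' A') ∪ (Subtype.val '' S') := by
      intro w hw
      have hwP : w ∈ A ∪ S := hWiP hw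
      rcases hWi' (show (⟨w, hwP⟩ : ↥(A ∪ S)) ∈ Subtype.val ⁻¹' Wi from hw) with h | h
      · exact Or.inl ⟨_, h, rfl⟩
      · exact Or.inr ⟨_, h, rfl⟩
    have hY₀ : otherUnion Ws Wi ⊆ (Subtype.val '' B') ∪ (Subtype.val '' S') := by
      intro y hy
      have hyP : y ∈ A ∪ S := hYP hy
      rcases hY' (hYlift ⟨y, hyP⟩ hy) with h | h
      · exact Or.inl ⟨_, h, rfl⟩
      · exact Or.inr ⟨_, h, rfl⟩
    -- S lies on one side of the separation (A', S', B')
    have hside : (∀ s : ↥(A ∪ S), (s : V) ∈ S → s ∉ B') ∨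
                 (∀ s : ↥(A ∪ S), (s : V) ∈ S → s ∉ A') := by
      by_contra h
      push_neg at h
      obtain ⟨⟨s, hsS, hsB⟩, t, htS, htA⟩ := h
      have hne : t ≠ s := hsep'.disjoint_AB.ne_of_mem htA hsB
      exact hsep'.no_adj htA hsB ((restrictGraph_adj' G A S t s).2 (Or.inr ⟨hne, htS, hsS⟩))
    rcases hside with hS1 | hS2
    · -- S on the A'-side : take (val A' ∪ B, val S', val B')
      refine ⟨Subtype.val '' A' ∪ B, Subtype.val '' S', Subtype.val '' B', ?_, ?_, ?_, ?_, hcard⟩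
      · constructor
        · rw [Set.disjoint_union_left]
          exact ⟨(Set.disjoint_image_iff hvalinj).2 hsep'.disjoint_AS,
            (hdisjBP.mono_right himS)⟩
        · rw [Set.disjoint_union_left]
          exact ⟨(Set.disjoint_image_iff hvalinj).2 hsep'.disjoint_AB,
            (hdisjBP.mono_right himB)⟩
        · exact (Set.disjoint_image_iff hvalinj).2 hsep'.disjoint_SB
        · apply Set.eq_univ_of_forall
          intro v
          have hv : v ∈ A ∪ S ∪ B := by rw [hsep.union_eq]; trivial
          rcases hv with hv | hv
          · have hv' : (⟨v, hv⟩ : ↥(A ∪ S)) ∈ A' ∪ S' ∪ B' := by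
              rw [hsep'.union_eq]; trivial
            rcases hv' with (h | h) | h
            · exact Or.inl (Or.inl (Or.inl ⟨_, h, rfl⟩))
            · exact Or.inl (Or.inr ⟨_, h, rfl⟩)
            · exact Or.inr ⟨_, h, rfl⟩
          · exact Or.inl (Or.inl (Or.inr hv))
        · rintro a b (⟨x, hxA, rfl⟩ | haB) ⟨y, hyB, rfl⟩ hadj
          · exact hsep'.no_adj hxA hyB ((restrictGraph_adj' G A S x y).2 (Or.inl hadj))
          · rcases himB ⟨y, hyB, rfl⟩ with hyA | hyS
            · exact hsep.no_adj hyA haB hadj.symm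
            · exact hS1 y hyS hyB
      · intro w hw
        rcases hWi₀ hw with h | h
        · exact Or.inl (Or.inl h)
        · exact Or.inr h
      · exact hY₀
      · exact hB'.image _
    · -- S on the B'-side : take (val A', val S', val B' ∪ B)
      refine ⟨Subtype.val '' A', Subtype.val '' S', Subtype.val '' B' ∪ B, ?_, hWi₀, ?_, ?_, hcard⟩
      · constructor
        · exact (Set.disjoint_image_iff hvalinj).2 hsep'.disjoint_AS
        · rw [Set.disjoint_union_right]
          exact ⟨(Set.disjoint_image_iff hvalinj).2 hsep'.disjoint_AB,
            ((hdisjBP.mono_right himA).symm)⟩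
        · rw [Set.disjoint_union_right]
          exact ⟨(Set.disjoint_image_iff hvalinj).2 hsep'.disjoint_SB,
            ((hdisjBP.mono_right himS).symm)⟩
        · apply Set.eq_univ_of_forall
          intro v
          have hv : v ∈ A ∪ S ∪ B := by rw [hsep.union_eq]; trivial
          rcases hv with hv | hv
          · have hv' : (⟨v, hv⟩ : ↥(A ∪ S)) ∈ A' ∪ S' ∪ B' := by
              rw [hsep'.union_eq]; trivial
            rcases hv' with (h | h) | h
            · exact Or.inl (Or.inl ⟨_, h, rfl⟩)
            · exact Or.inl (Or.inr ⟨_, h, rfl⟩)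
            · exact Or.inr (Or.inl ⟨_, h, rfl⟩)
          · exact Or.inr (Or.inr hv)
        · rintro a b ⟨x, hxA, rfl⟩ (⟨y, hyB, rfl⟩ | hbB) hadj
          · exact hsep'.no_adj hxA hyB ((restrictGraph_adj' G A S x y).2 (Or.inl hadj))
          · rcases himA ⟨x, hxA, rfl⟩ with hxA' | hxS
            · exact hsep.no_adj hxA' hbB hadj
            · exact hS2 x hxS hxA
      · intro y hy
        rcases hY₀ hy with h | h
        · exact Or.inl (Or.inl h)
        · exact Or.inr h
      · exact (hB'.image Subtype.val).inl
  -- final case analysis on the `flpG` branches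
  by_cases hWiu : Wi = Set.univ
  · have hPu : A ∪ S = Set.univ := Set.eq_univ_of_univ_subset (hWiu ▸ hWiP)
    have hWiu' : (Subtype.val ⁻¹' Wi : Set ↥(A ∪ S)) = Set.univ := by
      rw [hWiu, Set.preimage_univ]
    unfold flpInst flpG
    rw [if_pos hWiu, if_pos hWiu', hWiu', hWiu, Set.ncard_univ, Set.ncard_univ]
    exact le_of_eq (by rw [hPu]; exact (Nat.card_congr (Equiv.Set.univ V)).symm)
  · by_cases hWiu' : (Subtype.val ⁻¹' Wi : Set ↥(A ∪ S)) = Set.univ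
    · unfold flpInst flpG
      rw [if_neg hWiu, if_pos hWiu', hWiu', Set.ncard_univ, Nat.card_coe_set_eq]
      have hB : B.Nonempty := by
        rcases Set.eq_empty_or_nonempty B with hBe | hB
        · exfalso
          apply hWiu
          have hPu : A ∪ S = Set.univ := by
            rw [← hsep.union_eq, hBe, Set.union_empty]
          have hPWi : A ∪ S ⊆ Wi := by
            intro v hv
            have : (⟨v, hv⟩ : ↥(A ∪ S)) ∈ Subtype.val ⁻¹' Wi := by
              rw [hWiu']; trivial
            exact this
          exact Set.eq_univ_of_univ_subset (hPu ▸ hPWi)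
        · exact hB
      apply Nat.sInf_le
      refine ⟨∅, A ∪ S, B, ?_, ?_, ?_, hB, rfl⟩
      · constructor
        · simp
        · simp
        · rw [Set.disjoint_union_left]
          exact ⟨hsep.disjoint_AB, hsep.disjoint_SB⟩
        · rw [Set.empty_union, hsep.union_eq]
        · intro a b ha _ _
          exact absurd ha (Set.notMem_empty a)
      · rw [Set.empty_union]; exact hWiP
      · intro y _
        have hy : y ∈ A ∪ S ∪ B := by rw [hsep.union_eq]; trivial
        rcases hy with h | h
        · exact Or.inr h
        · exact Or.inl h
    · unfold flpInst flpG
      rw [if_neg hWiu, if_neg hWiu']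
      obtain ⟨v, hv⟩ := Set.ne_univ_iff_exists_notMem _ |>.1 hWiu'
      have hneR : {n : ℕ | ∃ A' S' B' : Set ↥(A ∪ S),
          IsSeparation (restrictGraph G A S) A' S' B' ∧
          (Subtype.val ⁻¹' Wi : Set ↥(A ∪ S)) ⊆ A' ∪ S' ∧
          otherUnion (restrictSets Ws A S) (Subtype.val ⁻¹' Wi) ⊆ B' ∪ S' ∧
          B'.Nonempty ∧ S'.ncard = n}.Nonempty := by
        refine ⟨(Set.univ \ {v}).ncard, ∅, Set.univ \ {v}, {v}, ?_, ?_, ?_, ⟨v, rfl⟩, rfl⟩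
        · constructor
          · simp
          · simp
          · simp
          · rw [Set.empty_union, Set.diff_union_self, Set.univ_union]
          · intro a b ha _ _
            exact absurd ha (Set.notMem_empty a)
        · intro x hx
          refine Or.inr ⟨trivial, ?_⟩
          intro hxv
          exact hv (by
            have hxv' : x = v := hxv
            rw [← hxv']; exact hx)
        · intro x _
          by_cases h : x = v
          · exact Or.inl h
          · exact Or.inr ⟨trivial, h⟩
      apply Nat.sInf_le
      exact htrans _ (Nat.sInf_mem hneR)
end

section
/- Let I = (G, {W_1, …, W_t}, k) be an instance of Partitioned Subset Treewidth, let (A, S, B) be a separation of G with |S| ≤ k+1, and let W_i be a terminal clique of both I and I ◁ (A,S) such that there exists another terminal clique W_j ≠ W_i of I ◁ (A,S) with W_j ⊇ S. Then flp_{I ◁ (A,S)}(W_i) ≥ flp_I(W_i). -/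
open SimpleGraph

variable {V ι : Type*}

/-- If `(A, S, B)` is a separation of `G` with `|S| ≤ k + 1`, `W_i` is a terminal clique of
both `I` and `I ◁ (A, S)`, and some other terminal clique `W_j ≠ W_i` of `I ◁ (A, S)` is a
superset of `S`, then `flp_{I ◁ (A,S)}(W_i) ≥ flp_I(W_i)`. -/
theorem restrict_flp_of_superset {V : Type} [Fintype V]
    (G : SimpleGraph V) (Ws : Set (Set V)) (k : ℕ)
    (hI : IsPSTWInstance G Ws k)
    (A S B : Set V) (hsep : IsSeparation G A S B) (hScard : S.ncard ≤ k + 1)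
    (Wi : Set V) (hWi : Wi ∈ Ws) (hWi' : Wi ∈ restrictCliques Ws A S)
    (hWj : ∃ Wj ∈ restrictCliques Ws A S, Wj ≠ Wi ∧ S ⊆ Wj) :
    flpInst G Ws Wi
      ≤ flpInst (restrictGraph G A S) (restrictSets Ws A S) (Subtype.val ⁻¹' Wi) := by
  classical
  obtain ⟨hfin, hne, hk, hcl⟩ := hI
  have huniv : ∀ v : V, v ∈ A ∪ S ∪ B := by
    intro v
    have := hsep.union_eq
    rw [Set.eq_univ_iff_forall] at this
    exact this v
  -- every restricted clique is contained in A ∪ S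
  have hsub : ∀ W ∈ restrictCliques Ws A S, W ⊆ A ∪ S := by
    rintro W hW v hv
    rcases hW with ⟨hWmem, a, haW, haA⟩ | ⟨rfl, -⟩
    · rcases huniv v with h | h
      · exact h
      · exfalso
        have hanv : a ≠ v := by
          rintro rfl
          exact Set.disjoint_left.mp hsep.disjoint_AB haA h
        exact hsep.no_adj haA h ((hcl W hWmem).1 haW hv hanv)
    · exact Or.inr hv
  have himg : ∀ W ∈ restrictCliques Ws A S,
      Subtype.val '' (Subtype.val ⁻¹' W : Set ↥(A ∪ S)) = W := by
    intro W hW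
    exact Set.image_preimage_eq_of_subset (by rw [Subtype.range_coe]; exact hsub W hW)
  have hinj : ∀ W ∈ restrictCliques Ws A S, ∀ W' ∈ restrictCliques Ws A S,
      (Subtype.val ⁻¹' W : Set ↥(A ∪ S)) = Subtype.val ⁻¹' W' → W = W' := by
    intro W hW W' hW' h
    rw [← himg W hW, ← himg W' hW', h]
  obtain ⟨Wj, hWjmem, hWjne, hSWj⟩ := hWj
  -- S sits inside the union of the other restricted cliques
  have hSsub' : (Subtype.val ⁻¹' S : Set ↥(A ∪ S)) ⊆
      otherUnion (restrictSets Ws A S) (Subtype.val ⁻¹' Wi) := by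
    intro x hx
    refine Set.mem_sUnion.mpr ⟨Subtype.val ⁻¹' Wj, ⟨⟨Wj, hWjmem, rfl⟩, ?_⟩, hSWj hx⟩
    simp only [Set.mem_singleton_iff]
    intro h
    exact hWjne (hinj Wj hWjmem Wi hWi' h)
  by_cases hc : (Subtype.val ⁻¹' Wi : Set ↥(A ∪ S)) = Set.univ
  · -- then Wi = A ∪ S
    have hWiAS : Wi = A ∪ S := by
      refine subset_antisymm (hsub Wi hWi') (fun v hv => ?_)
      have : (⟨v, hv⟩ : ↥(A ∪ S)) ∈ (Set.univ : Set ↥(A ∪ S)) := Set.mem_univ _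
      rw [← hc] at this
      exact this
    have hRHS : flpInst (restrictGraph G A S) (restrictSets Ws A S) (Subtype.val ⁻¹' Wi)
        = Wi.ncard := by
      rw [flpInst, flpG, if_pos hc, hc, Set.ncard_univ, ← Nat.card_coe_set_eq, hWiAS]
    rw [hRHS, flpInst, flpG]
    by_cases hWu : Wi = Set.univ
    · rw [if_pos hWu]
    · rw [if_neg hWu]
      refine Nat.sInf_le ⟨∅, Wi, Wiᶜ, ⟨?_, ?_, ?_, ?_, ?_⟩, ?_, ?_, ?_, rfl⟩
      · exact Set.empty_disjoint _
      · exact Set.empty_disjoint _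
      · exact disjoint_compl_right
      · simp
      · intro a b ha _ _
        exact Set.notMem_empty a ha
      · simp
      · intro v _
        by_cases h : v ∈ Wi
        · exact Or.inr h
        · exact Or.inl h
      · exact Set.nonempty_compl.mpr hWu
  · -- main case
    have hWiu : Wi ≠ Set.univ := by
      intro h
      apply hc
      rw [h, Set.preimage_univ]
    set Y' := otherUnion (restrictSets Ws A S) (Subtype.val ⁻¹' Wi) with hY'
    set T' := {n : ℕ | ∃ A' S' B' : Set ↥(A ∪ S),
        IsSeparation (restrictGraph G A S) A' S' B' ∧
        (Subtype.val ⁻¹' Wi : Set ↥(A ∪ S)) ⊆ A' ∪ S' ∧ Y' ⊆ B' ∪ S' ∧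
        B'.Nonempty ∧ S'.ncard = n} with hT'
    have hRHS : flpInst (restrictGraph G A S) (restrictSets Ws A S) (Subtype.val ⁻¹' Wi)
        = sInf T' := by
      rw [flpInst, flpG, if_neg hc]
    have hT'ne : T'.Nonempty := by
      obtain ⟨b, hb⟩ : ∃ b : ↥(A ∪ S), b ∉ (Subtype.val ⁻¹' Wi : Set ↥(A ∪ S)) := by
        by_contra h
        push_neg at h
        exact hc (Set.eq_univ_of_forall h)
      refine ⟨({b}ᶜ : Set ↥(A ∪ S)).ncard, ∅, {b}ᶜ, {b}, ⟨?_, ?_, ?_, ?_, ?_⟩, ?_, ?_, ?_, rfl⟩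
      · exact Set.empty_disjoint _
      · exact Set.empty_disjoint _
      · exact disjoint_compl_left
      · rw [Set.empty_union, Set.compl_union_self]
      · intro a b' ha _ _
        exact Set.notMem_empty a ha
      · intro x hx
        refine Or.inr ?_
        simp only [Set.mem_compl_iff, Set.mem_singleton_iff]
        rintro rfl
        exact hb hx
      · intro x _
        by_cases h : x = b
        · exact Or.inl (h ▸ rfl)
        · exact Or.inr h
      · exact Set.singleton_nonempty b
    obtain ⟨A', S', B', hsep', hWisub', hother', hB'ne, hS'card⟩ := Nat.sInf_mem hT'ne
    -- transfer adjacency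
    have hadj : ∀ x y : ↥(A ∪ S), G.Adj x.val y.val → (restrictGraph G A S).Adj x y := by
      intro x y h
      exact Or.inl h
    have hSB' : (Subtype.val ⁻¹' S : Set ↥(A ∪ S)) ⊆ B' ∪ S' :=
      fun x hx => hother' (hSsub' hx)
    have hA'A : Subtype.val '' A' ⊆ A := by
      rintro v ⟨x, hxA', rfl⟩
      rcases x.2 with h | h
      · exact h
      · exfalso
        rcases hSB' h with h' | h'
        · exact Set.disjoint_left.mp hsep'.disjoint_AB hxA' h'
        · exact Set.disjoint_left.mp hsep'.disjoint_AS hxA' h'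
    have hS'AS : Subtype.val '' S' ⊆ A ∪ S := by
      rintro v ⟨x, _, rfl⟩
      exact x.2
    have hcard : (Subtype.val '' S').ncard = sInf T' := by
      rw [Set.ncard_image_of_injective _ Subtype.val_injective, hS'card]
    rw [hRHS, flpInst, flpG, if_neg hWiu]
    refine Nat.sInf_le ⟨Subtype.val '' A', Subtype.val '' S', Subtype.val '' B' ∪ B,
      ⟨?_, ?_, ?_, ?_, ?_⟩, ?_, ?_, ?_, hcard⟩
    · exact (Set.disjoint_image_iff Subtype.val_injective).mpr hsep'.disjoint_AS
    · refine Set.disjoint_union_right.mpr ⟨?_, ?_⟩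
      · exact (Set.disjoint_image_iff Subtype.val_injective).mpr hsep'.disjoint_AB
      · exact hsep.disjoint_AB.mono_left hA'A
    · refine Set.disjoint_union_right.mpr ⟨?_, ?_⟩
      · exact (Set.disjoint_image_iff Subtype.val_injective).mpr hsep'.disjoint_SB
      · refine Disjoint.mono_left hS'AS ?_
        exact Set.disjoint_union_left.mpr ⟨hsep.disjoint_AB, hsep.disjoint_SB⟩
    · have h1 : Subtype.val '' A' ∪ Subtype.val '' S' ∪ Subtype.val '' B' = A ∪ S := by
        rw [← Set.image_union, ← Set.image_union, hsep'.union_eq, Set.image_univ,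
          Subtype.range_coe]
      have h2 : Subtype.val '' A' ∪ Subtype.val '' S' ∪ (Subtype.val '' B' ∪ B)
          = Subtype.val '' A' ∪ Subtype.val '' S' ∪ Subtype.val '' B' ∪ B := by
        rw [Set.union_assoc (Subtype.val '' A' ∪ Subtype.val '' S')]
      rw [h2, h1, hsep.union_eq]
    · rintro a b ha hb hadj'
      obtain ⟨xa, hxa, rfl⟩ := ha
      rcases hb with ⟨xb, hxb, rfl⟩ | hbB
      · exact hsep'.no_adj hxa hxb (hadj xa xb hadj')
      · exact hsep.no_adj (hA'A ⟨xa, hxa, rfl⟩) hbB hadj'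
    · intro v hv
      have hvAS : v ∈ A ∪ S := hsub Wi hWi' hv
      have : (⟨v, hvAS⟩ : ↥(A ∪ S)) ∈ A' ∪ S' := hWisub' hv
      rcases this with h | h
      · exact Or.inl ⟨⟨v, hvAS⟩, h, rfl⟩
      · exact Or.inr ⟨⟨v, hvAS⟩, h, rfl⟩
    · intro v hv
      obtain ⟨W, ⟨hWmem, hWne⟩, hvW⟩ := hv
      simp only [Set.mem_singleton_iff] at hWne
      rcases huniv v with h | hB
      · set x : ↥(A ∪ S) := ⟨v, h⟩ with hx
        have hxBS : x ∈ B' ∪ S' := by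
          by_cases hWA : (W ∩ A).Nonempty
          · have hWr : W ∈ restrictCliques Ws A S := Or.inl ⟨hWmem, hWA⟩
            refine hother' (Set.mem_sUnion.mpr ⟨Subtype.val ⁻¹' W, ⟨⟨W, hWr, rfl⟩, ?_⟩, hvW⟩)
            simp only [Set.mem_singleton_iff]
            intro h'
            exact hWne (hinj W hWr Wi hWi' h')
          · have hvS : v ∈ S := by
              rcases h with h' | h'
              · exact absurd ⟨v, hvW, h'⟩ hWA
              · exact h'
            exact hSB' hvS
        rcases hxBS with h' | h'
        · exact Or.inl (Or.inl ⟨x, h', rfl⟩)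
        · exact Or.inr ⟨x, h', rfl⟩
      · exact Or.inl (Or.inr hB)
    · obtain ⟨x, hx⟩ := hB'ne
      exact ⟨x.val, Or.inl ⟨x, hx, rfl⟩⟩
end

section
/- Let I = (G, {W_1, …, W_t}, k) be an instance of Partitioned Subset Treewidth and let (A, S, B) be a safe separation of I. Then at least one of the following holds: (1) I ◁ (A,S) has fewer terminal cliques than I; (2) {W_1, …, W_t} ◁ (A,S) = {W_1, …, W_t}; (3) S is a terminal clique of I ◁ (A,S) but not of I, and there exists a terminal clique W_i of I with W_i ∩ B ≠ ∅ and flp_{I ◁ (A,S)}(S) ≥ flp_I(W_i). -/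
open SimpleGraph

variable {V ι : Type*}

/-- If `(A, S, B)` is a safe separation of the instance `I = (G, Ws, k)` then: (1)
`I ◁ (A, S)` has fewer terminal cliques than `I`; or (2) the terminal cliques of `I ◁ (A, S)`
coincide with those of `I`; or (3) `S` is a terminal clique of `I ◁ (A, S)` but not of `I`,
and there is a terminal clique `W_i` of `I` meeting `B` with
`flp_{I ◁ (A,S)}(S) ≥ flp_I(W_i)`. -/
theorem safe_separation_flp_cases {V : Type} [Fintype V]
    (G : SimpleGraph V) (Ws : Set (Set V)) (k : ℕ)
    (hI : IsPSTWInstance G Ws k)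
    (A S B : Set V) (hsafe : IsSafeSeparation G Ws A S B) :
    (restrictCliques Ws A S).ncard < Ws.ncard ∨
    restrictCliques Ws A S = Ws ∨
    (S ∈ restrictCliques Ws A S ∧ S ∉ Ws ∧
      ∃ Wi ∈ Ws, (Wi ∩ B).Nonempty ∧
        flpInst G Ws Wi
          ≤ flpInst (restrictGraph G A S) (restrictSets Ws A S) (Subtype.val ⁻¹' S)) := by
  classical
  obtain ⟨hsep, hA, hB, Wa, hWa, Wb, hWb, hlinkA, hlinkB⟩ := hsafe
  by_cases hcond : ∃ W' ∈ Ws, (W' ∩ A).Nonempty ∧ S ⊆ W'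
  · -- a superset of S meeting A exists: restriction is a subset of Ws
    have hRC : restrictCliques Ws A S = {W ∈ Ws | (W ∩ A).Nonempty} := by
      unfold restrictCliques
      ext W
      simp only [Set.mem_union, Set.mem_setOf_eq, Set.mem_sep_iff]
      constructor
      · rintro (h | ⟨rfl, h⟩)
        · exact h
        · exact absurd hcond h
      · exact Or.inl
    by_cases heq : restrictCliques Ws A S = Ws
    · exact Or.inr (Or.inl heq)
    · refine Or.inl (Set.ncard_lt_ncard (HasSubset.Subset.ssubset_of_ne ?_ heq) hI.1)
      rw [hRC]; exact fun W hW => hW.1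
  · have hRC : restrictCliques Ws A S = insert S {W ∈ Ws | (W ∩ A).Nonempty} := by
      unfold restrictCliques
      ext W
      simp only [Set.mem_union, Set.mem_setOf_eq, Set.mem_sep_iff, Set.mem_insert_iff]
      tauto
    by_cases hSWs : S ∈ Ws
    · by_cases heq : restrictCliques Ws A S = Ws
      · exact Or.inr (Or.inl heq)
      · refine Or.inl (Set.ncard_lt_ncard (HasSubset.Subset.ssubset_of_ne ?_ heq) hI.1)
        rw [hRC]
        rintro W (rfl | ⟨hW, -⟩)
        · exact hSWs
        · exact hW
    · -- hard case : S ∉ Ws and no clique meeting A contains S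
      -- Step 1 : Wb meets B
      have hWbB : (Wb ∩ B).Nonempty := by
        by_contra hWbB
        have hY : (B ∪ S) ∩ Wb = S ∩ Wb := by
          ext x
          simp only [Set.mem_inter_iff, Set.mem_union]
          constructor
          · rintro ⟨hx | hx, hxW⟩
            · exact absurd ⟨hxW, hx⟩ (fun h => hWbB ⟨x, h⟩)
            · exact ⟨hx, hxW⟩
          · rintro ⟨hx, hxW⟩; exact ⟨Or.inr hx, hxW⟩
        have hsepmem : IsSep G S (S ∩ Wb) (S ∩ Wb) :=
          fun x y _ hy p => ⟨y, hy, p.end_mem_support⟩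
        have hle : flowG G S (S ∩ Wb) ≤ (S ∩ Wb).ncard :=
          Nat.sInf_le ⟨S ∩ Wb, hsepmem, rfl⟩
        have hlink : flowG G S (S ∩ Wb) = S.ncard := by
          have := hlinkB; rw [LinkedInto, hY] at this; exact this
        have hSeq : S ∩ Wb = S :=
          Set.eq_of_subset_of_ncard_le Set.inter_subset_left (by omega) (Set.toFinite S)
        have hSsub : S ⊆ Wb := by rw [← hSeq]; exact Set.inter_subset_right
        by_cases hWbA : (Wb ∩ A).Nonempty
        · exact hcond ⟨Wb, hWb, hWbA, hSsub⟩
        · have hWbS : Wb ⊆ S := by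
            intro x hx
            have hxu : x ∈ A ∪ S ∪ B := hsep.union_eq ▸ Set.mem_univ x
            rcases hxu with (hx' | hx') | hx'
            · exact absurd ⟨x, hx, hx'⟩ hWbA
            · exact hx'
            · exact absurd ⟨x, hx, hx'⟩ (fun h => hWbB h)
          exact hSWs (hSsub.antisymm hWbS ▸ hWb)
      -- cliques meeting A avoid B
      have hcliqueAB : ∀ W ∈ Ws, (W ∩ A).Nonempty → W ∩ B = ∅ := by
        rintro W hW ⟨a, haW, haA⟩
        rw [Set.eq_empty_iff_forall_notMem]
        rintro b ⟨hbW, hbB⟩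
        have hne : a ≠ b := by
          rintro rfl; exact (Set.disjoint_left.mp hsep.disjoint_AB haA) hbB
        exact hsep.no_adj haA hbB (((hI.2.2.2 W hW).1) haW hbW hne)
      have hWbA : Wb ∩ A = ∅ := by
        by_contra h
        exact hWbB.ne_empty (hcliqueAB Wb hWb (Set.nonempty_iff_ne_empty.mpr h))
      have hWbSB : Wb ⊆ S ∪ B := by
        intro x hx
        have hxu : x ∈ A ∪ S ∪ B := hsep.union_eq ▸ Set.mem_univ x
        rcases hxu with (hx' | hx') | hx'
        · exact absurd (Set.mem_inter hx hx') (by rw [hWbA]; exact Set.notMem_empty x)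
        · exact Or.inl hx'
        · exact Or.inr hx'
      by_cases hD : ∃ Wd ∈ Ws, Wd ∩ A = ∅ ∧ Wd ≠ Wb
      · -- at least two cliques dropped : case (1)
        obtain ⟨Wd, hWd, hWdA, hWdne⟩ := hD
        left
        have hsub : {W ∈ Ws | (W ∩ A).Nonempty} ⊆ Ws \ {Wd, Wb} := by
          rintro W ⟨hW, hWA⟩
          refine ⟨hW, ?_⟩
          rintro (rfl | rfl)
          · exact hWA.ne_empty hWdA
          · exact hWA.ne_empty hWbA
        have hpair : ({Wd, Wb} : Set (Set V)) ⊆ Ws := by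
          rintro W (rfl | rfl) <;> assumption
        have h1 : (restrictCliques Ws A S).ncard ≤ {W ∈ Ws | (W ∩ A).Nonempty}.ncard + 1 := by
          rw [hRC]; exact Set.ncard_insert_le _ _
        have h2 : {W ∈ Ws | (W ∩ A).Nonempty}.ncard ≤ (Ws \ {Wd, Wb}).ncard :=
          Set.ncard_le_ncard hsub (hI.1.diff)
        have h3 : (Ws \ {Wd, Wb}).ncard = Ws.ncard - 2 := by
          rw [Set.ncard_diff hpair, Set.ncard_pair hWdne]
        have h4 : 2 ≤ Ws.ncard := by
          have := Set.ncard_le_ncard hpair hI.1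
          rw [Set.ncard_pair hWdne] at this; exact this
        omega
      · -- exactly one dropped clique, which is Wb : case (3)
        push_neg at hD
        have hD' : ∀ W ∈ Ws, W ≠ Wb → (W ∩ A).Nonempty := by
          intro W hW hne
          by_contra h
          rw [Set.not_nonempty_iff_eq_empty] at h
          exact hne (hD W hW h)
        right; right
        refine ⟨?_, hSWs, Wb, hWb, hWbB, ?_⟩
        · rw [hRC]; exact Set.mem_insert _ _
        · -- the flp inequality
          set U : Set V := A ∪ S with hU
          set X' : Set ↥U := Subtype.val ⁻¹' S with hX'
          obtain ⟨a0, ha0⟩ := hA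
          have ha0U : a0 ∈ U := Or.inl ha0
          have ha0S : a0 ∉ S := Set.disjoint_left.mp hsep.disjoint_AS ha0
          have hXne : X' ≠ Set.univ := by
            intro h
            have : (⟨a0, ha0U⟩ : ↥U) ∈ X' := by rw [h]; exact Set.mem_univ _
            exact ha0S this
          have hWbne : Wb ≠ Set.univ := by
            intro h
            have : a0 ∈ Wb := by rw [h]; exact Set.mem_univ a0
            exact (Set.eq_empty_iff_forall_notMem.mp hWbA a0) ⟨this, ha0⟩
          set G' := restrictGraph G A S with hG'
          set Y'' := otherUnion (restrictSets Ws A S) X' with hY''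
          set R := {n : ℕ | ∃ A' S' B' : Set ↥U, IsSeparation G' A' S' B' ∧
            X' ⊆ A' ∪ S' ∧ Y'' ⊆ B' ∪ S' ∧ B'.Nonempty ∧ S'.ncard = n} with hRdef
          have hRHS : flpInst G' (restrictSets Ws A S) X' = sInf R := by
            rw [flpInst, flpG, if_neg hXne]
          have hRne : R.Nonempty := by
            obtain ⟨b0, hb0⟩ := (Set.ne_univ_iff_exists_notMem X').mp hXne
            refine ⟨({b0}ᶜ : Set ↥U).ncard, ∅, {b0}ᶜ, {b0}, ?_, ?_, ?_, ⟨b0, rfl⟩, rfl⟩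
            · refine ⟨?_, ?_, disjoint_compl_left, by rw [Set.empty_union, Set.compl_union_self], ?_⟩
              · exact Set.disjoint_left.mpr (fun x hx => absurd hx (Set.notMem_empty x))
              · exact Set.disjoint_left.mpr (fun x hx => absurd hx (Set.notMem_empty x))
              · intro a b ha; exact absurd ha (Set.notMem_empty a)
            · intro x hx
              right
              simp only [Set.mem_compl_iff, Set.mem_singleton_iff]
              rintro rfl; exact hb0 hx
            · intro x _
              by_cases h : x = b0
              · exact Or.inl (h ▸ rfl)
              · exact Or.inr (by simpa using h)
          obtain ⟨A', S', B', hsep', hXsub, hYsub, hB'ne, hcard⟩ := Nat.sInf_mem hRne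
          -- build the corresponding separation of G
          set Adot := Subtype.val '' A' with hAdot
          set Sdot := Subtype.val '' S' with hSdot
          set Bdot := Subtype.val '' B' with hBdot
          have hval : Function.Injective (Subtype.val : ↥U → V) := Subtype.val_injective
          have hsubU : ∀ T : Set ↥U, Subtype.val '' T ⊆ U := by
            rintro T v ⟨x, _, rfl⟩; exact x.2
          have hdisjBU : Disjoint U B := by
            rw [Set.disjoint_union_left]
            exact ⟨hsep.disjoint_AB, hsep.disjoint_SB⟩
          have hSsub : S ⊆ Adot ∪ Sdot := by
            intro s hs
            have : (⟨s, Or.inr hs⟩ : ↥U) ∈ A' ∪ S' := hXsub hs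
            rcases this with h | h
            · exact Or.inl ⟨_, h, rfl⟩
            · exact Or.inr ⟨_, h, rfl⟩
          have hsepG : IsSeparation G (Adot ∪ B) Sdot Bdot := by
            refine ⟨?_, ?_, ?_, ?_, ?_⟩
            · rw [Set.disjoint_union_left]
              exact ⟨(Set.disjoint_image_iff hval).mpr hsep'.disjoint_AS,
                (hdisjBU.mono_left (hsubU S')).symm⟩
            · rw [Set.disjoint_union_left]
              exact ⟨(Set.disjoint_image_iff hval).mpr hsep'.disjoint_AB,
                (hdisjBU.mono_left (hsubU B')).symm⟩
            · exact (Set.disjoint_image_iff hval).mpr hsep'.disjoint_SB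
            · have himg : Adot ∪ Sdot ∪ Bdot = U := by
                rw [hAdot, hSdot, hBdot, ← Set.image_union, ← Set.image_union,
                  hsep'.union_eq, Set.image_univ, Subtype.range_coe]
              have : Adot ∪ B ∪ Sdot ∪ Bdot = (Adot ∪ Sdot ∪ Bdot) ∪ B := by
                ext v; simp only [Set.mem_union]; tauto
              rw [this, himg, hU]
              have := hsep.union_eq
              ext v
              simp only [Set.mem_union, Set.mem_univ, iff_true]
              have hv : v ∈ A ∪ S ∪ B := this ▸ Set.mem_univ v
              tauto
            · rintro a b ha ⟨b', hb', rfl⟩ hadj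
              rcases ha with ⟨a', ha', rfl⟩ | ha
              · exact hsep'.no_adj ha' hb' (Or.inl hadj)
              · rcases b'.2 with hbA | hbS
                · exact hsep.no_adj hbA ha hadj.symm
                · have : b' ∈ A' ∪ S' := hXsub hbS
                  rcases this with h | h
                  · exact Set.disjoint_left.mp hsep'.disjoint_AB h hb'
                  · exact Set.disjoint_left.mp hsep'.disjoint_SB h hb'
          have hWbsub : Wb ⊆ (Adot ∪ B) ∪ Sdot := by
            intro x hx
            rcases hWbSB hx with hxS | hxB
            · rcases hSsub hxS with h | h
              · exact Or.inl (Or.inl h)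
              · exact Or.inr h
            · exact Or.inl (Or.inr hxB)
          have hYsubG : otherUnion Ws Wb ⊆ Bdot ∪ Sdot := by
            rintro v ⟨W, ⟨hWWs, hWne⟩, hvW⟩
            have hWne' : W ≠ Wb := hWne
            have hWA : (W ∩ A).Nonempty := hD' W hWWs hWne'
            have hWB : W ∩ B = ∅ := hcliqueAB W hWWs hWA
            have hWU : W ⊆ U := by
              intro x hx
              have hxu : x ∈ A ∪ S ∪ B := hsep.union_eq ▸ Set.mem_univ x
              rcases hxu with hx' | hx'
              · exact hx'
              · exact absurd (Set.mem_inter hx hx') (by rw [hWB]; exact Set.notMem_empty x)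
            have hvU : v ∈ U := hWU hvW
            have hTY : (⟨v, hvU⟩ : ↥U) ∈ Y'' := by
              refine ⟨Subtype.val ⁻¹' W, ⟨⟨W, ?_, rfl⟩, ?_⟩, hvW⟩
              · exact Or.inl ⟨hWWs, hWA⟩
              · simp only [Set.mem_singleton_iff]
                intro h
                rw [hX'] at h
                have himg := congrArg (fun T => Subtype.val '' T) h
                simp only [Subtype.image_preimage_coe] at himg
                have hWeq : W = S := by
                  rwa [Set.inter_eq_self_of_subset_right hWU,
                    Set.image_preimage_eq_of_subset (by rw [Subtype.range_coe]; exact Set.subset_union_right)] at himg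
                exact hSWs (hWeq ▸ hWWs)
            rcases hYsub hTY with h | h
            · exact Or.inl ⟨_, h, rfl⟩
            · exact Or.inr ⟨_, h, rfl⟩
          have hLHS : flpInst G Ws Wb = sInf {n : ℕ | ∃ A₁ S₁ B₁ : Set V,
              IsSeparation G A₁ S₁ B₁ ∧ Wb ⊆ A₁ ∪ S₁ ∧ otherUnion Ws Wb ⊆ B₁ ∪ S₁ ∧
              B₁.Nonempty ∧ S₁.ncard = n} := by
            rw [flpInst, flpG, if_neg hWbne]
          rw [hLHS, hRHS]
          refine Nat.sInf_le ⟨Adot ∪ B, Sdot, Bdot, hsepG, hWbsub, hYsubG, hB'ne.image _, ?_⟩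
          rw [hSdot, Set.ncard_image_of_injective _ hval, hcard]
end

section
/- Let I = (G, {W_1, …, W_t}, k) be an instance of Partitioned Subset Treewidth that has no safe separations. Then for each pair of terminal cliques W_i, W_j with |W_i| ≤ |W_j|, the set W_i is strictly linked into W_j. -/
open SimpleGraph

variable {V ι : Type*}

/-- Key construction: from a minimum `(Wi, Wj)`-separator `S` containing neither `Wi` nor
`Wj`, we build a safe separation with `A` the reachability region of `Wi`. -/
lemma key_safe_sep {V : Type} [Fintype V] (G : SimpleGraph V) (Ws : Set (Set V))
    {Wi Wj S : Set V} (hWi : Wi ∈ Ws) (hWj : Wj ∈ Ws)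
    (hsep : IsSep G Wi Wj S) (hmin : S.ncard = flowG G Wi Wj)
    (hWiS : ¬ Wi ⊆ S) (hWjS : ¬ Wj ⊆ S) :
    IsSafeSeparation G Ws (reachG G Wi S) S ((reachG G Wi S ∪ S)ᶜ) := by
  classical
  set A := reachG G Wi S with hA
  set B := (A ∪ S)ᶜ with hB
  have hAS : ∀ v ∈ A, v ∉ S := by
    rintro v ⟨x, hx, hxS, p, hp⟩
    exact hp v p.end_mem_support
  have hWisubAS : Wi ⊆ A ∪ S := by
    intro x hx
    by_cases hxS : x ∈ S
    · exact Or.inr hxS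
    · refine Or.inl ⟨x, hx, hxS, SimpleGraph.Walk.nil, ?_⟩
      intro w hw
      simp only [SimpleGraph.Walk.support_nil, List.mem_singleton] at hw
      subst hw; exact hxS
  have hWjB : Wj \ S ⊆ B := by
    rintro y ⟨hyW, hyS⟩
    intro hy
    rcases hy with hyA | hyS'
    · obtain ⟨x, hx, hxS, p, hp⟩ := hyA
      obtain ⟨s, hsS, hsp⟩ := hsep hx hyW p
      exact hp s hsp hsS
    · exact hyS hyS'
  -- S is a separator of S from anything
  have hWjsubBS : Wj ⊆ B ∪ S := by
    intro y hy
    by_cases hyS : y ∈ S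
    · exact Or.inr hyS
    · exact Or.inl (hWjB ⟨hy, hyS⟩)
  refine ⟨⟨?_, ?_, ?_, ?_, ?_⟩, ?_, ?_, Wi, hWi, Wj, hWj, ?_, ?_⟩
  · exact Set.disjoint_left.2 hAS
  · exact Set.disjoint_left.2 fun a ha hb => hb (Or.inl ha)
  · exact Set.disjoint_left.2 fun s hs hb => hb (Or.inr hs)
  · exact Set.union_compl_self _
  · -- no edge from A to B
    rintro a b ha hb hadj
    obtain ⟨x, hx, hxS, p, hp⟩ := ha
    have hbS : b ∉ S := fun hbS => hb (Or.inr hbS)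
    refine hb (Or.inl ⟨x, hx, hxS, p.concat hadj, ?_⟩)
    intro w hw
    rw [SimpleGraph.Walk.support_concat, List.mem_append] at hw
    rcases hw with hw | hw
    · exact hp w hw
    · simp only [List.mem_singleton] at hw; subst hw; exact hbS
  · -- A nonempty
    obtain ⟨x, hx, hxS⟩ := Set.not_subset.1 hWiS
    refine ⟨x, x, hx, hxS, SimpleGraph.Walk.nil, ?_⟩
    intro w hw
    simp only [SimpleGraph.Walk.support_nil, List.mem_singleton] at hw
    subst hw; exact hxS
  · -- B nonempty
    obtain ⟨y, hy, hyS⟩ := Set.not_subset.1 hWjS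
    exact ⟨y, hWjB ⟨hy, hyS⟩⟩
  · -- S linked into (A ∪ S) ∩ Wi
    have hself : IsSep G S ((A ∪ S) ∩ Wi) S := fun s y hs _ p => ⟨s, hs, p.start_mem_support⟩
    refine le_antisymm (Nat.sInf_le ⟨S, hself, rfl⟩) (le_csInf ⟨S.ncard, S, hself, rfl⟩ ?_)
    rintro _ ⟨T, hT, rfl⟩
    rw [hmin]
    refine Nat.sInf_le ⟨T, ?_, rfl⟩
    intro x y hx hy p
    obtain ⟨s, hsS, hsp⟩ := hsep hx hy p
    obtain ⟨t, ht, htq⟩ := hT hsS ⟨hWisubAS hx, hx⟩ (p.takeUntil s hsp).reverse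
    rw [SimpleGraph.Walk.support_reverse, List.mem_reverse] at htq
    exact ⟨t, ht, p.support_takeUntil_subset hsp htq⟩
  · -- S linked into (B ∪ S) ∩ Wj
    have hself : IsSep G S ((B ∪ S) ∩ Wj) S := fun s y hs _ p => ⟨s, hs, p.start_mem_support⟩
    refine le_antisymm (Nat.sInf_le ⟨S, hself, rfl⟩) (le_csInf ⟨S.ncard, S, hself, rfl⟩ ?_)
    rintro _ ⟨T, hT, rfl⟩
    rw [hmin]
    refine Nat.sInf_le ⟨T, ?_, rfl⟩
    intro x y hx hy p
    obtain ⟨s, hsS, hsp⟩ := hsep hx hy p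
    obtain ⟨t, ht, htq⟩ := hT hsS ⟨hWjsubBS hy, hy⟩ (p.dropUntil s hsp)
    exact ⟨t, ht, p.support_dropUntil_subset hsp htq⟩

/-- If the instance `I = (G, Ws, k)` has no safe separations, then for every pair of terminal
cliques `W_i, W_j` with `|W_i| ≤ |W_j|`, the clique `W_i` is strictly linked into `W_j`. -/
theorem no_safe_separation_strictly_linked {V : Type} [Fintype V]
    (G : SimpleGraph V) (Ws : Set (Set V)) (k : ℕ)
    (hI : IsPSTWInstance G Ws k)
    (hnosafe : ∀ A S B : Set V, ¬ IsSafeSeparation G Ws A S B) :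
    ∀ Wi ∈ Ws, ∀ Wj ∈ Ws, Wi.ncard ≤ Wj.ncard → StrictlyLinkedInto G Wi Wj := by
  intro Wi hWi Wj hWj hcard
  have hWiSep : IsSep G Wi Wj Wi := fun x y hx _ p => ⟨x, hx, p.start_mem_support⟩
  have hne : (Set.ncard '' {S : Set V | IsSep G Wi Wj S}).Nonempty := ⟨_, Wi, hWiSep, rfl⟩
  have hflow_le : flowG G Wi Wj ≤ Wi.ncard := Nat.sInf_le ⟨Wi, hWiSep, rfl⟩
  obtain ⟨S0, hS0sep, hS0card⟩ : ∃ S, IsSep G Wi Wj S ∧ S.ncard = flowG G Wi Wj := by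
    obtain ⟨S, hS, h⟩ := Nat.sInf_mem hne
    exact ⟨S, hS, h⟩
  have hflow_ge : Wi.ncard ≤ flowG G Wi Wj := by
    by_contra h
    push_neg at h
    have hS0lt : S0.ncard < Wi.ncard := hS0card ▸ h
    have hWiS : ¬ Wi ⊆ S0 := fun hsub =>
      absurd (Set.ncard_le_ncard hsub S0.toFinite) (by omega)
    have hWjS : ¬ Wj ⊆ S0 := fun hsub =>
      absurd (Set.ncard_le_ncard hsub S0.toFinite) (by omega)
    exact hnosafe _ _ _ (key_safe_sep G Ws hWi hWj hS0sep hS0card hWiS hWjS)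
  have hlinked : LinkedInto G Wi Wj := le_antisymm hflow_le hflow_ge
  refine ⟨hlinked, ?_⟩
  intro S hSsep hScard
  by_contra h
  push_neg at h
  obtain ⟨hSWi, hSWj⟩ := h
  have hmin : S.ncard = flowG G Wi Wj := by rw [hScard, hlinked]
  have hWiS : ¬ Wi ⊆ S := by
    intro hsub
    exact hSWi (Set.eq_of_subset_of_ncard_le hsub (le_of_eq hScard)).symm
  have hWjS : ¬ Wj ⊆ S := by
    intro hsub
    have : S.ncard ≤ Wj.ncard := hScard.le.trans hcard
    exact hSWj (Set.eq_of_subset_of_ncard_le hsub this).symm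
  exact hnosafe _ _ _ (key_safe_sep G Ws hWi hWj hSsep hmin hWiS hWjS)
end
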